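/- arXiv:math/0506092 — 4 statements merged into one kernel-verified Lean document; each statement's English description precedes it below -/
import Mathlib

section
/- Let π be a nonzero Borel measure on (0,∞) with ∫ min(r, r²) π(dr) < ∞, and Ψ(q) = ∫_{(0,∞)} (e^{-q r} − 1 + q r) π(dr). Suppose u : [0,∞) × (0,∞) → (0,∞) is such that for every q > 0 the map t ↦ u_t(q) is differentiable with ∂u_t(q)/∂t = −Ψ(u_t(q)) and u_0(q) = q. Then the following are equivalent: (i) ∫_1^∞ ds/Ψ(s) < ∞; (ii) for every t > 0, sup_{q > 0} u_t(q) < ∞. -/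
open MeasureTheory Set Filter

lemma aux_nonneg (x : ℝ) : 0 ≤ Real.exp (-x) - 1 + x := by
  have := Real.add_one_le_exp (-x); linarith

lemma aux_pos {x : ℝ} (hx : x ≠ 0) : 0 < Real.exp (-x) - 1 + x := by
  have := Real.add_one_lt_exp (neg_ne_zero.mpr hx); linarith

lemma aux_bound {q r : ℝ} (hq : 0 ≤ q) (hr : 0 < r) :
    Real.exp (-(q * r)) - 1 + q * r ≤ max q (q ^ 2) * min r (r ^ 2) := by
  have hexp1 : Real.exp (-(q * r)) ≤ 1 := Real.exp_le_one_iff.mpr (by nlinarith)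
  rcases le_or_gt 1 r with h1 | h1
  · have hmin : min r (r ^ 2) = r := min_eq_left (by nlinarith)
    rw [hmin]
    have : q ≤ max q (q ^ 2) := le_max_left _ _
    nlinarith
  · have hmin : min r (r ^ 2) = r ^ 2 := min_eq_right (by nlinarith)
    rw [hmin]
    have hq2 : q ^ 2 ≤ max q (q ^ 2) := le_max_right _ _
    rcases le_or_gt (q * r) 1 with h2 | h2
    · have habs : |Real.exp (-(q*r)) - 1 - (-(q*r))| ≤ (-(q*r)) ^ 2 :=
        Real.abs_exp_sub_one_sub_id_le (by rw [abs_neg, abs_of_nonneg (by positivity)]; exact h2)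
      have := abs_le.mp habs
      nlinarith
    · nlinarith

/-- With `π` a nonzero measure on `(0,∞)` with finite
`∫ min(r,r²) π(dr)` and `Ψ(q) = ∫ (e^{-qr} - 1 + qr) π(dr)`, suppose
`u : [0,∞) × (0,∞) → (0,∞)` satisfies `∂u_t(q)/∂t = -Ψ(u_t(q))`, `u_0(q) = q`.
Then `∫_1^∞ ds/Ψ(s) < ∞` iff for every `t > 0`, `sup_{q>0} u_t(q) < ∞`. -/
theorem stmt1
    (π : Measure ℝ) (hπ : π ≠ 0) (hπsupp : π (Set.Ioi 0)ᶜ = 0)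
    (hπmom : ∫⁻ r, ENNReal.ofReal (min r (r ^ 2)) ∂π < ⊤)
    (Ψ : ℝ → ℝ)
    (hΨ : ∀ q : ℝ, Ψ q = ∫ r, (Real.exp (-q * r) - 1 + q * r) ∂π)
    (u : ℝ → ℝ → ℝ)
    (hu_pos : ∀ t, 0 ≤ t → ∀ q, 0 < q → 0 < u t q)
    (hu0 : ∀ q, 0 < q → u 0 q = q)
    (hu_deriv : ∀ q, 0 < q → ∀ t, 0 ≤ t →
      HasDerivWithinAt (fun s => u s q) (-Ψ (u t q)) (Set.Ici 0) t) :
    IntegrableOn (fun s => (Ψ s)⁻¹) (Set.Ici 1) ↔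
      ∀ t, 0 < t → ∃ C : ℝ, ∀ q, 0 < q → u t q ≤ C := by
  -- a.e. positivity of r
  have hae : ∀ᵐ r ∂π, 0 < r := by
    rw [ae_iff]
    have hset : {a : ℝ | ¬ 0 < a} = (Set.Ioi 0)ᶜ := by ext a; simp [Set.mem_Ioi]
    rw [hset, hπsupp]
  -- integrability of the dominating function
  have hmincont : Continuous fun r : ℝ => min r (r ^ 2) :=
    continuous_id.min (continuous_pow 2)
  have hmin_int : Integrable (fun r => min r (r ^ 2)) π := by
    refine ⟨hmincont.aestronglyMeasurable, ?_⟩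
    rw [hasFiniteIntegral_iff_ofReal ?_]
    · exact hπmom
    · filter_upwards [hae] with r hr
      positivity
  -- integrability of the integrand defining Ψ
  have hFcont : ∀ q : ℝ, Continuous fun r => Real.exp (-q * r) - 1 + q * r := by
    intro q; fun_prop
  have hFint : ∀ q : ℝ, 0 ≤ q → Integrable (fun r => Real.exp (-q * r) - 1 + q * r) π := by
    intro q hq
    refine Integrable.mono (hmin_int.const_mul (max q (q ^ 2)))
      (hFcont q).aestronglyMeasurable ?_
    filter_upwards [hae] with r hr
    rw [Real.norm_eq_abs, abs_of_nonneg (by rw [neg_mul]; exact aux_nonneg _)]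
    refine le_trans ?_ (le_abs_self _)
    rw [neg_mul]; exact aux_bound hq hr
  -- positivity of Ψ
  have hπpos : 0 < π (Set.Ioi 0) := by
    rcases eq_or_lt_of_le (show (0:ENNReal) ≤ π (Set.Ioi 0) from zero_le) with h | h
    · exfalso
      apply Measure.measure_univ_ne_zero.mpr hπ
      have := measure_add_measure_compl (μ := π) (s := Set.Ioi 0) measurableSet_Ioi
      rw [← this, ← h, hπsupp]; simp
    · exact h
  have hΨpos : ∀ q, 0 < q → 0 < Ψ q := by
    intro q hq
    rw [hΨ]
    rw [integral_pos_iff_support_of_nonneg_ae ?_ (hFint q hq.le)]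
    · refine lt_of_lt_of_le hπpos (measure_mono ?_)
      intro r hr
      have : (0:ℝ) < Real.exp (-q * r) - 1 + q * r := by
        rw [neg_mul]; exact aux_pos (mul_pos hq hr).ne'
      exact Function.mem_support.mpr (ne_of_gt this)
    · filter_upwards [hae] with r hr
      rw [neg_mul]; exact aux_nonneg _
  -- continuity of Ψ on (0,∞)
  have hΨcont : ContinuousOn Ψ (Set.Ioi 0) := by
    have hΨfun : Ψ = fun q => ∫ r, (Real.exp (-q * r) - 1 + q * r) ∂π := funext hΨ
    rw [hΨfun]
    intro q₀ hq₀
    apply ContinuousAt.continuousWithinAt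
    apply continuousAt_of_dominated (bound := fun r => max (q₀+1) ((q₀+1)^2) * min r (r ^ 2))
    · exact .of_forall fun q => (hFcont q).aestronglyMeasurable
    · have hmem : Set.Ioo 0 (q₀ + 1) ∈ nhds q₀ :=
        Ioo_mem_nhds hq₀ (by linarith)
      filter_upwards [hmem] with q hqmem
      filter_upwards [hae] with r hr
      rw [Real.norm_eq_abs, abs_of_nonneg (by rw [neg_mul]; exact aux_nonneg _), neg_mul]
      refine le_trans (aux_bound hqmem.1.le hr) ?_
      have hmin0 : 0 ≤ min r (r ^ 2) := by positivity
      have : max q (q ^ 2) ≤ max (q₀+1) ((q₀+1)^2) := by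
        have h1 : q ≤ q₀ + 1 := hqmem.2.le
        have h2 : q ^ 2 ≤ (q₀ + 1) ^ 2 := by nlinarith [hqmem.1.le]
        exact max_le (h1.trans (le_max_left _ _)) (h2.trans (le_max_right _ _))
      exact mul_le_mul_of_nonneg_right this hmin0
    · exact hmin_int.const_mul _
    · exact .of_forall fun r => by fun_prop
  have hΨinv_cont : ContinuousOn (fun s => (Ψ s)⁻¹) (Set.Ioi 0) :=
    hΨcont.inv₀ fun x hx => (hΨpos x hx).ne'
  have h_int_sub : ∀ a b : ℝ, 0 < a → 0 < b →
      IntervalIntegrable (fun s => (Ψ s)⁻¹) volume a b := by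
    intro a b ha hb
    apply (hΨinv_cont.mono ?_).intervalIntegrable
    intro x hx
    rcases hx with ⟨h1, _⟩
    exact lt_of_lt_of_le (lt_min ha hb) h1
  -- the key identity
  have key : ∀ q, 0 < q → ∀ t, 0 ≤ t → (∫ x in (u t q)..q, (Ψ x)⁻¹) = t := by
    intro q hq t ht
    set φ : ℝ → ℝ := fun s => (∫ x in (u s q)..q, (Ψ x)⁻¹) - s with hφdef
    have hG : ∀ x : ℝ, 0 < x →
        HasDerivAt (fun y => ∫ z in y..q, (Ψ z)⁻¹) (-(Ψ x)⁻¹) x := by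
      intro x hx
      exact intervalIntegral.integral_hasDerivAt_left (h_int_sub x q hx hq)
        (hΨinv_cont.stronglyMeasurableAtFilter isOpen_Ioi x hx)
        (hΨinv_cont.continuousAt (isOpen_Ioi.mem_nhds hx))
    have hφderiv : ∀ s, 0 ≤ s → HasDerivWithinAt φ 0 (Set.Ici 0) s := by
      intro s hs
      have h1 := (hG (u s q) (hu_pos s hs q hq)).comp_hasDerivWithinAt s (hu_deriv q hq s hs)
      have h2 := h1.sub (hasDerivWithinAt_id s (Set.Ici 0))
      convert h2 using 1
      · rfl
      · rfl
      · rfl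
      have hne : Ψ (u s q) ≠ 0 := (hΨpos _ (hu_pos s hs q hq)).ne'
      simp [hne]
    have hφcont : ContinuousOn φ (Set.Icc 0 t) := fun s hs =>
      ((hφderiv s hs.1).continuousWithinAt).mono Icc_subset_Ici_self
    have hconst := constant_of_has_deriv_right_zero hφcont
      (fun s hs => (hφderiv s hs.1).mono (Ici_subset_Ici.mpr hs.1))
    have h3 := hconst t (right_mem_Icc.mpr ht)
    have hφ0 : φ 0 = 0 := by
      simp [hφdef, hu0 q hq, intervalIntegral.integral_same]
    rw [hφ0] at h3
    have : φ t = (∫ x in (u t q)..q, (Ψ x)⁻¹) - t := rfl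
    linarith [h3, this ▸ h3]
  constructor
  · -- (i) → (ii)
    intro hInt t ht
    have hIoi : IntegrableOn (fun s => (Ψ s)⁻¹) (Set.Ioi 1) :=
      hInt.mono_set Ioi_subset_Ici_self
    have htend := intervalIntegral_tendsto_integral_Ioi 1 hIoi tendsto_id
    set I := ∫ x in Set.Ioi 1, (Ψ x)⁻¹ with hI
    have hev : ∀ᶠ b in atTop, I - t < ∫ x in (1:ℝ)..b, (Ψ x)⁻¹ :=
      htend.eventually (eventually_gt_nhds (by linarith))
    obtain ⟨C, hC2, hC1⟩ := (hev.and (eventually_ge_atTop (1:ℝ))).exists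
    have htail : (∫ x in Set.Ioi C, (Ψ x)⁻¹) < t := by
      have hsplit : I = (∫ x in Set.Ioc 1 C, (Ψ x)⁻¹) + ∫ x in Set.Ioi C, (Ψ x)⁻¹ := by
        rw [hI, ← Set.Ioc_union_Ioi_eq_Ioi hC1]
        exact setIntegral_union (Set.Ioc_disjoint_Ioi le_rfl) measurableSet_Ioi
          (hIoi.mono_set (Set.Ioc_subset_Ioi_self)) (hIoi.mono_set (fun x hx => lt_of_le_of_lt hC1 hx))
      have heq : (∫ x in (1:ℝ)..C, (Ψ x)⁻¹) = ∫ x in Set.Ioc 1 C, (Ψ x)⁻¹ :=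
        intervalIntegral.integral_of_le hC1
      rw [heq] at hC2
      linarith
    refine ⟨C, fun q hq => ?_⟩
    by_contra hlt
    push_neg at hlt
    have hut := hu_pos t ht.le q hq
    have hk := key q hq t ht.le
    rcases le_or_gt (u t q) q with hle | hgt
    · have heq : (∫ x in (u t q)..q, (Ψ x)⁻¹) = ∫ x in Set.Ioc (u t q) q, (Ψ x)⁻¹ :=
        intervalIntegral.integral_of_le hle
      have hIC : IntegrableOn (fun s => (Ψ s)⁻¹) (Set.Ioi C) :=
        hInt.mono_set (fun x hx => le_of_lt (lt_of_le_of_lt hC1 hx))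
      have hmono : (∫ x in Set.Ioc (u t q) q, (Ψ x)⁻¹) ≤ ∫ x in Set.Ioi C, (Ψ x)⁻¹ := by
        apply setIntegral_mono_set hIC
        · have hnn : ∀ᵐ x ∂(volume.restrict (Set.Ioi C)), (0:ℝ) ≤ (Ψ x)⁻¹ :=
            (ae_restrict_iff' measurableSet_Ioi).mpr (.of_forall fun x hx =>
              (inv_nonneg).mpr (hΨpos x (lt_trans (lt_of_lt_of_le one_pos hC1) hx)).le)
          exact hnn
        · exact HasSubset.Subset.eventuallyLE fun x hx => lt_trans hlt hx.1
      linarith [heq ▸ hk]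
    · have heq : (∫ x in (u t q)..q, (Ψ x)⁻¹) = -∫ x in Set.Ioc q (u t q), (Ψ x)⁻¹ := by
        rw [intervalIntegral.integral_symm, intervalIntegral.integral_of_le hgt.le]
      have hnn : 0 ≤ ∫ x in Set.Ioc q (u t q), (Ψ x)⁻¹ :=
        setIntegral_nonneg measurableSet_Ioc fun x hx =>
          (inv_nonneg).mpr (hΨpos x (lt_trans hq hx.1)).le
      linarith [heq ▸ hk]
  · -- (ii) → (i)
    intro hBdd
    obtain ⟨C₀, hC₀⟩ := hBdd 1 one_pos
    set C := max C₀ 1 with hCdef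
    have hC1 : (1:ℝ) ≤ C := le_max_right _ _
    have hCpos : (0:ℝ) < C := lt_of_lt_of_le one_pos hC1
    set M := (∫ x in (1:ℝ)..C, (Ψ x)⁻¹) + 1 with hM
    have hnormeq : ∀ b : ℝ, 1 ≤ b →
        (∫ x in (1:ℝ)..b, ‖(Ψ x)⁻¹‖) = ∫ x in (1:ℝ)..b, (Ψ x)⁻¹ := by
      intro b hb
      apply intervalIntegral.integral_congr
      intro x hx
      rw [Set.uIcc_of_le hb] at hx
      show ‖(Ψ x)⁻¹‖ = (Ψ x)⁻¹
      rw [Real.norm_eq_abs, abs_of_nonneg ((inv_nonneg).mpr (hΨpos x (lt_of_lt_of_le one_pos hx.1)).le)]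
    have hbound : ∀ᶠ b in atTop, (∫ x in (1:ℝ)..b, ‖(Ψ x)⁻¹‖) ≤ M := by
      filter_upwards [eventually_ge_atTop C] with b hb
      have hb1 : (1:ℝ) ≤ b := hC1.trans hb
      have hbpos : (0:ℝ) < b := lt_of_lt_of_le one_pos hb1
      rw [hnormeq b hb1]
      have hu1 : u 1 b ≤ C := (hC₀ b hbpos).trans (le_max_left _ _)
      have hu1pos : 0 < u 1 b := hu_pos 1 one_pos.le b hbpos
      have hk := key b hbpos 1 one_pos.le
      have hadd1 : (∫ x in (u 1 b)..C, (Ψ x)⁻¹) + (∫ x in C..b, (Ψ x)⁻¹)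
          = ∫ x in (u 1 b)..b, (Ψ x)⁻¹ :=
        intervalIntegral.integral_add_adjacent_intervals
          (h_int_sub _ _ hu1pos hCpos) (h_int_sub _ _ hCpos hbpos)
      have hnn1 : 0 ≤ ∫ x in (u 1 b)..C, (Ψ x)⁻¹ :=
        intervalIntegral.integral_nonneg hu1 fun x hx =>
          (inv_nonneg).mpr (hΨpos x (lt_of_lt_of_le hu1pos hx.1)).le
      have hadd2 : (∫ x in (1:ℝ)..C, (Ψ x)⁻¹) + (∫ x in C..b, (Ψ x)⁻¹)
          = ∫ x in (1:ℝ)..b, (Ψ x)⁻¹ :=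
        intervalIntegral.integral_add_adjacent_intervals
          (h_int_sub _ _ one_pos hCpos) (h_int_sub _ _ hCpos hbpos)
      rw [hk] at hadd1
      linarith
    have hIoi : IntegrableOn (fun s => (Ψ s)⁻¹) (Set.Ioi 1) := by
      apply integrableOn_Ioi_of_intervalIntegral_norm_bounded M 1 ?_ tendsto_id hbound
      intro i
      simp only [id_eq]
      rcases le_or_gt i 1 with hi | hi
      · rw [Set.Ioc_eq_empty (not_lt.mpr hi)]
        exact integrableOn_empty
      · exact (h_int_sub 1 i one_pos (lt_trans one_pos hi)).1
    exact (integrableOn_Ici_iff_integrableOn_Ioi).mpr hIoi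
end

section
/- Let ν be a nonzero Borel measure on (0,1] with ∫ r² ν(dr) < ∞. Define Φ(q) = ∫_{(0,1]} (q r − 1 + (1−r)^q) ν(dr) for real q ≥ 1 and Ψ(q) = ∫_{(0,1]} (e^{-q r} − 1 + q r) ν(dr). Then Φ is nondecreasing on [1,∞), Φ(b) > 0 for every integer b ≥ 2, and the following are equivalent: (i) ∑_{b=2}^{∞} Φ(b)^{-1} < ∞; (ii) ∫_2^∞ dq/Φ(q) < ∞; (iii) ∫_1^∞ du/Ψ(u) < ∞. -/
set_option maxHeartbeats 1000000

open MeasureTheory Real Set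

namespace Stmt4Aux

noncomputable def g (x : ℝ) : ℝ := Real.exp (-x) - 1 + x

lemma g_nonneg (x : ℝ) : 0 ≤ g x := by
  have := Real.add_one_le_exp (-x); unfold g; linarith

lemma g_pos {x : ℝ} (hx : x ≠ 0) : 0 < g x := by
  have := Real.add_one_lt_exp (neg_ne_zero.mpr hx); unfold g; linarith

lemma g_le_sq {x : ℝ} (hx : 0 ≤ x) : g x ≤ x ^ 2 := by
  have h1 : x + 1 ≤ Real.exp x := Real.add_one_le_exp x
  have h3 : (0:ℝ) < Real.exp x := Real.exp_pos x
  have h2 : Real.exp (-x) * Real.exp x = 1 := by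
    rw [← Real.exp_add]; simp
  have h4 : 0 < Real.exp (-x) := Real.exp_pos _
  unfold g
  nlinarith [mul_le_mul_of_nonneg_left h1 h4.le, sq_nonneg x, mul_nonneg (mul_nonneg h4.le hx) hx]

lemma g_le_self {x : ℝ} (hx : 0 ≤ x) : g x ≤ x := by
  have : Real.exp (-x) ≤ 1 := Real.exp_le_one_iff.mpr (by linarith)
  unfold g; linarith

lemma g_mono {x y : ℝ} (hx : 0 ≤ x) (hxy : x ≤ y) : g x ≤ g y := by
  have h1 : Real.exp (-y) = Real.exp (-x) * Real.exp (x - y) := by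
    rw [← Real.exp_add]; ring_nf
  have h2 : (x - y) + 1 ≤ Real.exp (x - y) := Real.add_one_le_exp _
  have h3 : Real.exp (-x) ≤ 1 := Real.exp_le_one_iff.mpr (by linarith)
  have h4 : (0:ℝ) < Real.exp (-x) := Real.exp_pos _
  unfold g
  nlinarith [mul_le_mul_of_nonneg_left h2 h4.le]

lemma g_ge_quarter_sq {x : ℝ} (hx : 0 ≤ x) (hx2 : x ≤ 2) : x ^ 2 / 4 ≤ g x := by
  have h1 : (-(x/2)) + 1 ≤ Real.exp (-(x/2)) := Real.add_one_le_exp _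
  have h2 : (0:ℝ) ≤ 1 - x/2 := by linarith
  have h3 : Real.exp (-(x/2)) * Real.exp (-(x/2)) = Real.exp (-x) := by
    rw [← Real.exp_add]; ring_nf
  unfold g
  nlinarith [mul_le_mul h1 h1 (by linarith : (0:ℝ) ≤ -(x/2) + 1) (Real.exp_pos _).le]

lemma bern {r q : ℝ} (hr0 : 0 ≤ r) (hr1 : r ≤ 1) (hq : 1 ≤ q) :
    1 - q * r ≤ (1 - r) ^ q := by
  have h := one_add_mul_self_le_rpow_one_add (s := -r) (by linarith) hq
  have e1 : (1 : ℝ) + -r = 1 - r := by ring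
  have e2 : (1 : ℝ) + q * -r = 1 - q * r := by ring
  rw [e1, e2] at h
  exact h

lemma rpow_le_exp {r q : ℝ} (hr0 : 0 ≤ r) (hr1 : r ≤ 1) (hq : 0 ≤ q) :
    (1 - r) ^ q ≤ Real.exp (-(q * r)) := by
  have h2 : 1 - r ≤ Real.exp (-r) := by
    have := Real.add_one_le_exp (-r); linarith
  calc (1 - r) ^ q ≤ (Real.exp (-r)) ^ q :=
        Real.rpow_le_rpow (by linarith) h2 hq
    _ = Real.exp (-r * q) := (Real.exp_mul (-r) q).symm
    _ = Real.exp (-(q * r)) := by ring_nf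

lemma rpow_ge {r q : ℝ} (hr0 : 0 ≤ r) (hr1 : r ≤ 1/2) (hq : 0 ≤ q) :
    Real.exp (-(q * r)) * (1 - 2 * q * r ^ 2) ≤ (1 - r) ^ q := by
  rcases le_or_gt (1 - 2 * q * r ^ 2) 0 with h | h
  · calc Real.exp (-(q * r)) * (1 - 2 * q * r ^ 2) ≤ 0 :=
          mul_nonpos_of_nonneg_of_nonpos (Real.exp_pos _).le h
      _ ≤ (1 - r) ^ q := Real.rpow_nonneg (by linarith) q
  · have hr1' : (0:ℝ) < 1 - r := by linarith
    have hlog : -(r + 2 * r ^ 2) ≤ Real.log (1 - r) := by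
      have h2 := Real.log_le_sub_one_of_pos (inv_pos.mpr hr1')
      rw [Real.log_inv] at h2
      have h3 : (1 - r)⁻¹ - 1 = r / (1 - r) := by field_simp; ring
      have h4 : r / (1 - r) ≤ r + 2 * r ^ 2 := by
        rw [div_le_iff₀ hr1']; nlinarith
      linarith
    have hrw : (1 - r) ^ q = Real.exp (Real.log (1 - r) * q) :=
      Real.rpow_def_of_pos hr1' q
    rw [hrw]
    have h5 : Real.exp (-(r + 2 * r ^ 2) * q) ≤ Real.exp (Real.log (1 - r) * q) :=
      Real.exp_le_exp.mpr (mul_le_mul_of_nonneg_right hlog hq)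
    have h6 : Real.exp (-(r + 2 * r ^ 2) * q) =
        Real.exp (-(q * r)) * Real.exp (-(2 * q * r ^ 2)) := by
      rw [← Real.exp_add]; ring_nf
    have h7 : 1 - 2 * q * r ^ 2 ≤ Real.exp (-(2 * q * r ^ 2)) := by
      have := Real.add_one_le_exp (-(2 * q * r ^ 2)); linarith
    calc Real.exp (-(q * r)) * (1 - 2 * q * r ^ 2)
        ≤ Real.exp (-(q * r)) * Real.exp (-(2 * q * r ^ 2)) :=
          mul_le_mul_of_nonneg_left h7 (Real.exp_pos _).le
      _ = Real.exp (-(r + 2 * r ^ 2) * q) := h6.symm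
      _ ≤ _ := h5

lemma mono_f {r q1 q2 : ℝ} (hr0 : 0 ≤ r) (hr1 : r ≤ 1) (hq1 : 1 ≤ q1) (hq : q1 ≤ q2) :
    q1 * r - 1 + (1 - r) ^ q1 ≤ q2 * r - 1 + (1 - r) ^ q2 := by
  rcases eq_or_lt_of_le hr1 with rfl | hr1'
  · -- r = 1 : base is 0
    have hq10 : q1 ≠ 0 := ne_of_gt (by linarith)
    have hq20 : q2 ≠ 0 := ne_of_gt (by linarith)
    rw [sub_self, Real.zero_rpow hq10, Real.zero_rpow hq20]
    linarith
  · set a := 1 - r with ha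
    have ha0 : 0 < a := by simp [ha]; linarith
    have ha1 : a ≤ 1 := by simp [ha]; linarith
    set L := Real.log a with hL
    have hLle : L ≤ 0 := Real.log_nonpos ha0.le ha1
    have hrw1 : a ^ q1 = Real.exp (L * q1) := Real.rpow_def_of_pos ha0 q1
    have hrw2 : a ^ q2 = Real.exp (L * q2) := Real.rpow_def_of_pos ha0 q2
    rw [hrw1, hrw2]
    have hΔ : 0 ≤ q2 - q1 := by linarith
    have e1 : Real.exp (L * q2) = Real.exp (L * q1) * Real.exp (L * (q2 - q1)) := by
      rw [← Real.exp_add]; ring_nf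
    have e2 : L * (q2 - q1) + 1 ≤ Real.exp (L * (q2 - q1)) := Real.add_one_le_exp _
    have e3 : Real.exp (L * q1) ≤ a := by
      rw [← Real.exp_log ha0]
      exact Real.exp_le_exp.mpr (by nlinarith)
    have e5 : a * (-L) ≤ 1 - a := by
      have h5 := Real.log_le_sub_one_of_pos (inv_pos.mpr ha0)
      rw [Real.log_inv] at h5
      have := mul_le_mul_of_nonneg_left h5 ha0.le
      have e : a * (a⁻¹ - 1) = 1 - a := by field_simp
      rw [e] at this; exact this
    have key : Real.exp (L * q1) - Real.exp (L * q2) ≤ (q2 - q1) * r := by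
      have t1 : Real.exp (L * q1) - Real.exp (L * q2)
          = Real.exp (L * q1) * (1 - Real.exp (L * (q2 - q1))) := by rw [e1]; ring
      have t2 : 1 - Real.exp (L * (q2 - q1)) ≤ -(L * (q2 - q1)) := by linarith
      have t3 : Real.exp (L * q1) * (1 - Real.exp (L * (q2 - q1)))
          ≤ Real.exp (L * q1) * (-(L * (q2 - q1))) :=
        mul_le_mul_of_nonneg_left t2 (Real.exp_pos _).le
      have t4 : Real.exp (L * q1) * (-(L * (q2 - q1)))
          = (Real.exp (L * q1) * (-L)) * (q2 - q1) := by ring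
      have t5 : Real.exp (L * q1) * (-L) ≤ a * (-L) :=
        mul_le_mul_of_nonneg_right e3 (by linarith)
      have t6 : a * (-L) ≤ r := by
        have : 1 - a = r := by simp [ha]
        linarith [e5]
      nlinarith [mul_le_mul_of_nonneg_right t5 hΔ, mul_le_mul_of_nonneg_right t6 hΔ]
    linarith

lemma upper_f {r q : ℝ} (hr0 : 0 ≤ r) (hr1 : r ≤ 1) (hq : 0 ≤ q) :
    q * r - 1 + (1 - r) ^ q ≤ g (q * r) := by
  have := rpow_le_exp hr0 hr1 hq; unfold g; linarith

lemma nonneg_f {r q : ℝ} (hr0 : 0 ≤ r) (hr1 : r ≤ 1) (hq : 1 ≤ q) :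
    0 ≤ q * r - 1 + (1 - r) ^ q := by
  have := bern hr0 hr1 hq; linarith

lemma lower_f {r q : ℝ} (hr0 : 0 < r) (hr1 : r ≤ 1) (hq : 16 ≤ q) :
    g (q * r) ≤ 32 * (q * r - 1 + (1 - r) ^ q) := by
  have hq0 : (0:ℝ) < q := by linarith
  have hx0 : 0 < q * r := mul_pos hq0 hr0
  have hP0 : 0 ≤ (1 - r) ^ q := Real.rpow_nonneg (by linarith) q
  rcases le_or_gt 2 (q * r) with hx2 | hx2
  · -- q*r ≥ 2
    have h1 : g (q * r) ≤ q * r := g_le_self hx0.le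
    linarith
  · -- q*r < 2 : then r ≤ 1/8
    have hr8 : r ≤ 1/8 := by nlinarith
    have hB := rpow_ge hr0.le (by linarith) hq0.le
    have hE1 : Real.exp (-(q * r)) ≤ 1 := Real.exp_le_one_iff.mpr (by linarith)
    have hE0 : (0:ℝ) < Real.exp (-(q * r)) := Real.exp_pos _
    rcases le_or_gt (q * r) 1 with hx1 | hx1
    · -- q*r ≤ 1
      have hg4 : (q * r) ^ 2 / 4 ≤ g (q * r) := g_ge_quarter_sq hx0.le (by linarith)
      have hK : 2 * q * r ^ 2 ≤ (q * r) ^ 2 / 8 := by nlinarith [sq_nonneg r]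
      have hK0 : 0 ≤ 2 * q * r ^ 2 := by positivity
      have hEK : Real.exp (-(q * r)) * (2 * q * r ^ 2) ≤ 2 * q * r ^ 2 :=
        mul_le_of_le_one_left hK0 hE1
      unfold g at *
      nlinarith
    · -- 1 < q*r < 2
      have hK : 2 * q * r ^ 2 ≤ 1/2 := by nlinarith
      have hK0 : 0 ≤ 2 * q * r ^ 2 := by positivity
      have hE2 : Real.exp (-(2:ℝ)) ≤ Real.exp (-(q * r)) := Real.exp_le_exp.mpr (by linarith)
      have hexp2 : (1:ℝ)/8 ≤ Real.exp (-(2:ℝ)) := by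
        have h9 := Real.exp_one_lt_d9
        have he2 : Real.exp (2:ℝ) = Real.exp 1 * Real.exp 1 := by
          rw [← Real.exp_add]; norm_num
        have h8 : Real.exp (2:ℝ) ≤ 8 := by nlinarith [Real.exp_pos 1]
        have : Real.exp (-(2:ℝ)) = (Real.exp 2)⁻¹ := Real.exp_neg 2
        rw [this]
        calc (1:ℝ)/8 = 8⁻¹ := by norm_num
          _ ≤ (Real.exp 2)⁻¹ := inv_anti₀ (Real.exp_pos 2) h8
      have hf : 1/16 ≤ q * r - 1 + (1 - r) ^ q := by
        have h1 : Real.exp (-(q * r)) * (1/2) ≤ Real.exp (-(q * r)) * (1 - 2 * q * r ^ 2) :=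
          mul_le_mul_of_nonneg_left (by linarith) hE0.le
        nlinarith
      have hg2 : g (q * r) ≤ 2 := by
        have := g_le_self hx0.le; linarith
      linarith

end Stmt4Aux

open Stmt4Aux

/-- For a nonzero measure `ν` on `(0,1]` with `∫ r² ν(dr) < ∞`,
with `Φ(q) = ∫ (qr - 1 + (1-r)^q) ν(dr)` (`q ≥ 1`) and
`Ψ(q) = ∫ (e^{-qr} - 1 + qr) ν(dr)`: `Φ` is nondecreasing on `[1,∞)`,
`Φ(b) > 0` for every integer `b ≥ 2`, and the following are equivalent:
(i) `∑_{b≥2} Φ(b)⁻¹ < ∞`; (ii) `∫_2^∞ dq/Φ(q) < ∞`; (iii) `∫_1^∞ du/Ψ(u) < ∞`. -/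
theorem stmt4
    (ν : Measure ℝ) (hν : ν ≠ 0) (hνsupp : ν (Set.Ioc 0 1)ᶜ = 0)
    (hνmom : ∫⁻ r, ENNReal.ofReal (r ^ 2) ∂ν < ⊤)
    (Φ Ψ : ℝ → ℝ)
    (hΦ : ∀ q : ℝ, 1 ≤ q → Φ q = ∫ r, (q * r - 1 + (1 - r) ^ q) ∂ν)
    (hΨ : ∀ q : ℝ, Ψ q = ∫ r, (Real.exp (-q * r) - 1 + q * r) ∂ν) :
    MonotoneOn Φ (Set.Ici 1) ∧
    (∀ b : ℕ, 2 ≤ b → 0 < Φ (b : ℝ)) ∧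
    ((Summable fun b : ℕ => (Φ ((b : ℝ) + 2))⁻¹) ↔
        IntegrableOn (fun q => (Φ q)⁻¹) (Set.Ici 2)) ∧
    (IntegrableOn (fun q => (Φ q)⁻¹) (Set.Ici 2) ↔
        IntegrableOn (fun s => (Ψ s)⁻¹) (Set.Ici 1)) := by
  -- a.e. membership
  have hae : ∀ᵐ r ∂ν, r ∈ Set.Ioc (0:ℝ) 1 := by
    rw [MeasureTheory.ae_iff]
    convert hνsupp using 2
    rfl
  -- integrability of r^2
  have hr2int : Integrable (fun r : ℝ => r ^ 2) ν := by
    refine ⟨(continuous_pow 2).aestronglyMeasurable, ?_⟩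
    rw [hasFiniteIntegral_iff_norm]
    have : ∀ r : ℝ, ENNReal.ofReal ‖r ^ 2‖ = ENNReal.ofReal (r ^ 2) := fun r => by
      rw [Real.norm_eq_abs, abs_of_nonneg (sq_nonneg r)]
    simpa [this] using hνmom
  -- integrability of the Φ-integrand
  have hFint : ∀ q : ℝ, 1 ≤ q → Integrable (fun r : ℝ => q * r - 1 + (1 - r) ^ q) ν := by
    intro q hq
    have hmeas : AEStronglyMeasurable (fun r : ℝ => q * r - 1 + (1 - r) ^ q) ν := by
      apply Measurable.aestronglyMeasurable
      exact (((measurable_const.mul measurable_id).sub measurable_const).add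
        ((measurable_const.sub measurable_id).pow measurable_const))
    refine Integrable.mono (hr2int.const_mul (q ^ 2)) hmeas ?_
    filter_upwards [hae] with r hr
    have h0 : 0 ≤ q * r - 1 + (1 - r) ^ q := nonneg_f hr.1.le hr.2 hq
    rw [Real.norm_eq_abs, Real.norm_eq_abs, abs_of_nonneg h0,
      abs_of_nonneg (by positivity : (0:ℝ) ≤ q ^ 2 * r ^ 2)]
    calc q * r - 1 + (1 - r) ^ q ≤ g (q * r) := upper_f hr.1.le hr.2 (by linarith)
      _ ≤ (q * r) ^ 2 := g_le_sq (mul_nonneg (by linarith) hr.1.le)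
      _ = q ^ 2 * r ^ 2 := by ring
  -- integrability of the Ψ-integrand
  have hGint : ∀ q : ℝ, 0 ≤ q → Integrable (fun r : ℝ => g (q * r)) ν := by
    intro q hq
    have hmeas : AEStronglyMeasurable (fun r : ℝ => g (q * r)) ν := by
      apply Continuous.aestronglyMeasurable
      unfold g; fun_prop
    refine Integrable.mono (hr2int.const_mul (q ^ 2)) hmeas ?_
    filter_upwards [hae] with r hr
    rw [Real.norm_eq_abs, Real.norm_eq_abs, abs_of_nonneg (g_nonneg _),
      abs_of_nonneg (by positivity : (0:ℝ) ≤ q ^ 2 * r ^ 2)]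
    calc g (q * r) ≤ (q * r) ^ 2 := g_le_sq (mul_nonneg hq hr.1.le)
      _ = q ^ 2 * r ^ 2 := by ring
  have hΨ' : ∀ q : ℝ, Ψ q = ∫ r, g (q * r) ∂ν := by
    intro q
    rw [hΨ q]
    congr 1; funext r; unfold g; rw [neg_mul]
  -- monotonicity of Φ
  have hΦmono : MonotoneOn Φ (Set.Ici (1:ℝ)) := by
    intro q1 h1 q2 h2 h12
    rw [hΦ q1 h1, hΦ q2 h2]
    refine integral_mono_ae (hFint q1 h1) (hFint q2 h2) ?_
    filter_upwards [hae] with r hr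
    exact mono_f hr.1.le hr.2 h1 h12
  -- ν (Ioc 0 1) positive
  have hIocpos : 0 < ν (Set.Ioc (0:ℝ) 1) := by
    rw [pos_iff_ne_zero]
    intro h0
    apply hν
    have huniv : ν Set.univ = 0 := by
      have hle := measure_union_le (μ := ν) (Set.Ioc (0:ℝ) 1) (Set.Ioc (0:ℝ) 1)ᶜ
      rw [Set.union_compl_self, h0, hνsupp] at hle
      simpa using hle
    exact Measure.measure_univ_eq_zero.mp huniv
  -- Φ 2 = ∫ r^2
  have hΦ2eq : Φ 2 = ∫ r, r ^ 2 ∂ν := by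
    rw [hΦ 2 one_le_two]
    refine integral_congr_ae ?_
    filter_upwards [hae] with r hr
    have h2 : ((1:ℝ) - r) ^ (2:ℝ) = (1 - r) ^ (2:ℕ) := by
      rw [show (2:ℝ) = ((2:ℕ):ℝ) by norm_num, Real.rpow_natCast]
    rw [h2]; ring
  have hΦ2pos : 0 < Φ 2 := by
    rw [hΦ2eq]
    rw [integral_pos_iff_support_of_nonneg_ae (Filter.Eventually.of_forall fun r => sq_nonneg r) hr2int]
    refine lt_of_lt_of_le hIocpos (measure_mono ?_)
    intro r hr
    simp only [Function.mem_support]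
    exact pow_ne_zero 2 (ne_of_gt hr.1)
  have hΦpos : ∀ q : ℝ, 2 ≤ q → 0 < Φ q := fun q hq =>
    lt_of_lt_of_le hΦ2pos (hΦmono (by norm_num) (by simp; linarith) hq)
  -- Ψ monotone and positive
  have hΨmono : MonotoneOn Ψ (Set.Ici (0:ℝ)) := by
    intro q1 h1 q2 h2 h12
    rw [hΨ' q1, hΨ' q2]
    refine integral_mono_ae (hGint q1 h1) (hGint q2 h2) ?_
    filter_upwards [hae] with r hr
    exact g_mono (mul_nonneg (by simpa using h1) hr.1.le)
      (mul_le_mul_of_nonneg_right h12 hr.1.le)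
  have hΨ1pos : 0 < Ψ 1 := by
    rw [hΨ' 1]
    rw [integral_pos_iff_support_of_nonneg_ae (Filter.Eventually.of_forall fun r => g_nonneg _)
      (hGint 1 zero_le_one)]
    refine lt_of_lt_of_le hIocpos (measure_mono ?_)
    intro r hr
    simp only [Function.mem_support]
    exact ne_of_gt (g_pos (by simpa using ne_of_gt hr.1))
  have hΨpos : ∀ s : ℝ, 1 ≤ s → 0 < Ψ s := fun s hs =>
    lt_of_lt_of_le hΨ1pos (hΨmono (by norm_num) (by simp; linarith) hs)
  -- comparisons
  have hΦleΨ : ∀ q : ℝ, 1 ≤ q → Φ q ≤ Ψ q := by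
    intro q hq
    rw [hΦ q hq, hΨ' q]
    refine integral_mono_ae (hFint q hq) (hGint q (by linarith)) ?_
    filter_upwards [hae] with r hr
    exact upper_f hr.1.le hr.2 (by linarith)
  have hΨleΦ : ∀ q : ℝ, 16 ≤ q → Ψ q ≤ 32 * Φ q := by
    intro q hq
    have hq1 : (1:ℝ) ≤ q := by linarith
    rw [hΦ q hq1, hΨ' q, ← integral_const_mul]
    refine integral_mono_ae (hGint q (by linarith)) ((hFint q hq1).const_mul 32) ?_
    filter_upwards [hae] with r hr
    exact lower_f hr.1 hr.2 hq
  -- norms of inverses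
  have hnormΦ : ∀ x : ℝ, 2 ≤ x → ‖(Φ x)⁻¹‖ = (Φ x)⁻¹ := fun x hx => by
    rw [Real.norm_eq_abs, abs_of_pos (inv_pos.mpr (hΦpos x hx))]
  have hnormΨ : ∀ x : ℝ, 1 ≤ x → ‖(Ψ x)⁻¹‖ = (Ψ x)⁻¹ := fun x hx => by
    rw [Real.norm_eq_abs, abs_of_pos (inv_pos.mpr (hΨpos x hx))]
  -- measurability of the inverse functions on tails
  have hΦ'mono : Monotone (fun q : ℝ => Φ (max q 2)) := by
    intro a b hab
    exact hΦmono (mem_Ici.mpr (le_trans one_le_two (le_max_right a 2)))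
      (mem_Ici.mpr (le_trans one_le_two (le_max_right b 2)))
      (max_le_max hab le_rfl)
  have hΦinvAESM : AEStronglyMeasurable (fun q => (Φ q)⁻¹)
      (volume.restrict (Set.Ici (2:ℝ))) := by
    refine ((hΦ'mono.measurable.inv).aestronglyMeasurable).congr ?_
    filter_upwards [ae_restrict_mem measurableSet_Ici] with q hq
    rw [Pi.inv_apply, max_eq_left (mem_Ici.mp hq)]
  have hΨ'mono : Monotone (fun q : ℝ => Ψ (max q 1)) := by
    intro a b hab
    exact hΨmono (mem_Ici.mpr (le_trans zero_le_one (le_max_right a 1)))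
      (mem_Ici.mpr (le_trans zero_le_one (le_max_right b 1)))
      (max_le_max hab le_rfl)
  have hΨinvAESM : AEStronglyMeasurable (fun q => (Ψ q)⁻¹)
      (volume.restrict (Set.Ici (1:ℝ))) := by
    refine ((hΨ'mono.measurable.inv).aestronglyMeasurable).congr ?_
    filter_upwards [ae_restrict_mem measurableSet_Ici] with q hq
    rw [Pi.inv_apply, max_eq_left (mem_Ici.mp hq)]
  have hrestr : ∀ {s t : Set ℝ}, s ⊆ t → ∀ {f : ℝ → ℝ},
      AEStronglyMeasurable f (volume.restrict t) →
      AEStronglyMeasurable f (volume.restrict s) := by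
    intro s t hst f hf
    exact hf.mono_measure (Measure.restrict_mono hst le_rfl)
  -- Equivalence (i) ↔ (ii)
  have hIff1 : (Summable fun b : ℕ => (Φ ((b : ℝ) + 2))⁻¹) ↔
      IntegrableOn (fun q => (Φ q)⁻¹) (Set.Ici 2) := by
    constructor
    · intro hsum
      rw [integrableOn_Ici_iff_integrableOn_Ioi]
      refine integrableOn_Ioi_of_intervalIntegral_norm_bounded
        (∑' b : ℕ, (Φ ((b : ℝ) + 2))⁻¹) 2
        (b := fun n : ℕ => 2 + (n : ℝ)) (l := Filter.atTop) ?_ ?_ ?_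
      · intro i
        have hanti : AntitoneOn (fun q => (Φ q)⁻¹) (Set.uIcc 2 (2 + (i:ℝ))) := by
          rw [uIcc_of_le (by linarith [Nat.cast_nonneg (α := ℝ) i] : (2:ℝ) ≤ 2 + (i:ℝ))]
          intro a ha b hb hab
          exact inv_anti₀ (hΦpos a ha.1)
            (hΦmono (mem_Ici.mpr (by linarith [ha.1])) (mem_Ici.mpr (by linarith [hb.1])) hab)
        exact hanti.intervalIntegrable.1
      · exact Filter.tendsto_atTop_add_const_left Filter.atTop (2:ℝ) tendsto_natCast_atTop_atTop
      · refine Filter.Eventually.of_forall fun i => ?_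
        have hanti : AntitoneOn (fun q => ‖(Φ q)⁻¹‖) (Set.Icc 2 (2 + (i:ℝ))) := by
          intro a ha b hb hab
          show ‖(Φ b)⁻¹‖ ≤ ‖(Φ a)⁻¹‖
          rw [hnormΦ a ha.1, hnormΦ b hb.1]
          exact inv_anti₀ (hΦpos a ha.1)
            (hΦmono (mem_Ici.mpr (by linarith [ha.1])) (mem_Ici.mpr (by linarith [hb.1])) hab)
        calc (∫ x in (2:ℝ)..2 + (i:ℝ), ‖(Φ x)⁻¹‖)
            ≤ ∑ k ∈ Finset.range i, ‖(Φ (2 + (k:ℝ)))⁻¹‖ := hanti.integral_le_sum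
          _ = ∑ k ∈ Finset.range i, (Φ ((k:ℝ) + 2))⁻¹ := by
              refine Finset.sum_congr rfl fun k _ => ?_
              rw [hnormΦ (2 + (k:ℝ)) (by linarith [Nat.cast_nonneg (α := ℝ) k]), add_comm]
          _ ≤ ∑' b : ℕ, (Φ ((b : ℝ) + 2))⁻¹ := by
              refine hsum.sum_le_tsum _ (fun b _ => ?_)
              exact (inv_pos.mpr (hΦpos _ (by linarith [Nat.cast_nonneg (α := ℝ) b]))).le
    · intro hint
      refine summable_of_sum_range_le (c := (Φ 2)⁻¹ + ∫ q in Set.Ici (2:ℝ), (Φ q)⁻¹)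
        (fun b => (inv_pos.mpr (hΦpos _ (by linarith [Nat.cast_nonneg (α := ℝ) b]))).le)
        (fun n => ?_)
      have hCnn : 0 ≤ ∫ q in Set.Ici (2:ℝ), (Φ q)⁻¹ := by
        refine integral_nonneg_of_ae ?_
        filter_upwards [ae_restrict_mem measurableSet_Ici] with q hq
        exact (inv_pos.mpr (hΦpos q hq)).le
      rcases n with _ | m
      · simpa using add_nonneg (inv_pos.mpr hΦ2pos).le hCnn
      · rw [Finset.sum_range_succ']
        have hanti : AntitoneOn (fun q => (Φ q)⁻¹) (Set.Icc 2 (2 + (m:ℝ))) := by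
          intro a ha b hb hab
          exact inv_anti₀ (hΦpos a ha.1)
            (hΦmono (mem_Ici.mpr (by linarith [ha.1])) (mem_Ici.mpr (by linarith [hb.1])) hab)
        have h1 : ∑ i ∈ Finset.range m, (Φ (((i:ℕ):ℝ) + 1 + 2))⁻¹
            ≤ ∫ x in (2:ℝ)..2 + (m:ℝ), (Φ x)⁻¹ := by
          refine le_trans (le_of_eq (Finset.sum_congr rfl fun i _ => ?_))
            hanti.sum_le_integral
          congr 1
          push_cast
          ring_nf
        have h2 : (∫ x in (2:ℝ)..2 + (m:ℝ), (Φ x)⁻¹) ≤ ∫ q in Set.Ici (2:ℝ), (Φ q)⁻¹ := by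
          rw [intervalIntegral.integral_of_le
            (by linarith [Nat.cast_nonneg (α := ℝ) m] : (2:ℝ) ≤ 2 + (m:ℝ))]
          refine setIntegral_mono_set hint ?_
            (HasSubset.Subset.eventuallyLE (fun x hx => le_of_lt hx.1))
          filter_upwards [ae_restrict_mem measurableSet_Ici] with q hq
          exact (inv_pos.mpr (hΦpos q hq)).le
        have h4 : (Φ (((0:ℕ):ℝ) + 2))⁻¹ = (Φ 2)⁻¹ := by norm_num
        have h5 : ∀ i : ℕ, (Φ (((i+1:ℕ):ℝ) + 2))⁻¹ = (Φ (((i:ℕ):ℝ) + 1 + 2))⁻¹ := by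
          intro i; congr 1; push_cast; ring_nf
        calc (∑ i ∈ Finset.range m, (Φ (((i + 1 : ℕ) : ℝ) + 2))⁻¹) + (Φ (((0:ℕ):ℝ) + 2))⁻¹
            = (∑ i ∈ Finset.range m, (Φ (((i:ℕ):ℝ) + 1 + 2))⁻¹) + (Φ 2)⁻¹ := by
              rw [h4]
              exact congrArg (· + (Φ 2)⁻¹) (Finset.sum_congr rfl fun i _ => h5 i)
          _ ≤ (∫ q in Set.Ici (2:ℝ), (Φ q)⁻¹) + (Φ 2)⁻¹ :=
              add_le_add (le_trans h1 h2) le_rfl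
          _ = (Φ 2)⁻¹ + ∫ q in Set.Ici (2:ℝ), (Φ q)⁻¹ := by ring
  -- Equivalence (ii) ↔ (iii)
  have hIff2 : IntegrableOn (fun q => (Φ q)⁻¹) (Set.Ici 2) ↔
      IntegrableOn (fun s => (Ψ s)⁻¹) (Set.Ici 1) := by
    constructor
    · intro hint
      rw [← Set.Icc_union_Ici_eq_Ici (by norm_num : (1:ℝ) ≤ 2)]
      refine IntegrableOn.union ?_ ?_
      · have hconst : IntegrableOn (fun _ : ℝ => (Ψ 1)⁻¹) (Set.Icc (1:ℝ) 2) volume := by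
          apply (integrableOn_const_iff (C := (Ψ 1)⁻¹)).mpr
          right
          exact measure_Icc_lt_top
        refine Integrable.mono hconst (hrestr Icc_subset_Ici_self hΨinvAESM) ?_
        filter_upwards [ae_restrict_mem measurableSet_Icc] with s hs
        rw [hnormΨ s hs.1, hnormΨ 1 le_rfl]
        exact inv_anti₀ hΨ1pos
          (hΨmono (mem_Ici.mpr zero_le_one) (mem_Ici.mpr (by linarith [hs.1])) hs.1)
      · refine Integrable.mono hint
          (hrestr (Set.Ici_subset_Ici.mpr one_le_two) hΨinvAESM) ?_
        filter_upwards [ae_restrict_mem measurableSet_Ici] with s hs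
        have hs1 : (1:ℝ) ≤ s := by linarith [mem_Ici.mp hs]
        rw [hnormΨ s hs1, hnormΦ s hs]
        exact inv_anti₀ (hΦpos s hs) (hΦleΨ s hs1)
    · intro hint
      rw [← Set.Icc_union_Ici_eq_Ici (by norm_num : (2:ℝ) ≤ 16)]
      refine IntegrableOn.union ?_ ?_
      · have hconst : IntegrableOn (fun _ : ℝ => (Φ 2)⁻¹) (Set.Icc (2:ℝ) 16) volume := by
          apply (integrableOn_const_iff (C := (Φ 2)⁻¹)).mpr
          right
          exact measure_Icc_lt_top
        refine Integrable.mono hconst (hrestr Icc_subset_Ici_self hΦinvAESM) ?_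
        filter_upwards [ae_restrict_mem measurableSet_Icc] with s hs
        rw [hnormΦ s hs.1, hnormΦ 2 le_rfl]
        exact inv_anti₀ hΦ2pos
          (hΦmono (mem_Ici.mpr one_le_two) (mem_Ici.mpr (by linarith [hs.1])) hs.1)
      · have hmaj : Integrable (fun s : ℝ => 32 * (Ψ s)⁻¹)
            (volume.restrict (Set.Ici (16:ℝ))) :=
          (hint.mono_set (Set.Ici_subset_Ici.mpr (by norm_num))).const_mul 32
        refine Integrable.mono hmaj
          (hrestr (Set.Ici_subset_Ici.mpr (by norm_num)) hΦinvAESM) ?_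
        filter_upwards [ae_restrict_mem measurableSet_Ici] with q hq
        have hq16 : (16:ℝ) ≤ q := mem_Ici.mp hq
        have hq1 : (1:ℝ) ≤ q := by linarith
        have hq2 : (2:ℝ) ≤ q := by linarith
        have hΨq := hΨpos q hq1
        have hΦq := hΦpos q hq2
        have hle : (Φ q)⁻¹ ≤ 32 * (Ψ q)⁻¹ := by
          have h1 : (Φ q)⁻¹ ≤ (Ψ q / 32)⁻¹ :=
            inv_anti₀ (by positivity) (by linarith [hΨleΦ q hq16])
          rw [inv_div, div_eq_mul_inv] at h1
          exact h1
        rw [hnormΦ q hq2, Real.norm_eq_abs,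
          abs_of_pos (by positivity : (0:ℝ) < 32 * (Ψ q)⁻¹)]
        exact hle
  exact ⟨hΦmono, fun b hb => hΦpos (b:ℝ) (by exact_mod_cast hb), hIff1, hIff2⟩
end

section
/- For t > 0 let μ_t be the measure on (0,∞) with density (4/t²) e^{−2x/t} with respect to Lebesgue measure. Then for every bounded continuous function f : (0,∞) → ℝ, the map t ↦ ∫ f dμ_t is differentiable on (0,∞) and its derivative at t equals (1/2) ∫∫ (f(x+y) − f(x) − f(y)) μ_t(dx) μ_t(dy). That is, (μ_t)_{t>0} solves Smoluchowski's coagulation equation with constant kernel K ≡ 1. -/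
open MeasureTheory

/-- The measure `μ_t(dx) = (4/t²) e^{-2x/t} dx` on `(0,∞)`. -/
noncomputable def fellerLevyMeasure (t : ℝ) : Measure ℝ :=
  (MeasureTheory.volume.restrict (Set.Ioi 0)).withDensity
    fun x => ENNReal.ofReal (4 / t ^ 2 * Real.exp (-2 * x / t))

open MeasureTheory Set Real Filter
open scoped ENNReal NNReal Topology

noncomputable def rho (t x : ℝ) : ℝ := 4 / t ^ 2 * Real.exp (-2 * x / t)

lemma rho_nonneg (t x : ℝ) : 0 ≤ rho t x := by unfold rho; positivity

lemma rho_meas (t : ℝ) : Measurable (rho t) := by unfold rho; fun_prop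

lemma integral_feller (t : ℝ) (g : ℝ → ℝ) :
    ∫ x, g x ∂(fellerLevyMeasure t) = ∫ x in Set.Ioi 0, rho t x * g x := by
  have hmeas : Measurable fun x : ℝ => (rho t x).toNNReal :=
    (rho_meas t).real_toNNReal
  rw [fellerLevyMeasure,
    show (fun x => ENNReal.ofReal (4 / t ^ 2 * Real.exp (-2 * x / t)))
      = fun x => ((rho t x).toNNReal : ℝ≥0∞) from rfl,
    integral_withDensity_eq_integral_smul hmeas]
  congr 1; ext x
  rw [NNReal.smul_def, Real.coe_toNNReal _ (rho_nonneg t x), smul_eq_mul]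

lemma integral_exp_Ioi {b : ℝ} (hb : 0 < b) (c : ℝ) :
    ∫ x in Ioi c, Real.exp (-b * x) = Real.exp (-b * c) / b := by
  have hderiv : ∀ x ∈ Ici c, HasDerivAt (fun x => -Real.exp (-b * x) / b)
      (Real.exp (-b * x)) x := by
    intro x _
    have h1 : HasDerivAt (fun x : ℝ => -b * x) (-b) x := by
      simpa using (hasDerivAt_id x).const_mul (-b)
    have := (h1.exp.neg).div_const b
    refine this.congr_deriv ?_
    field_simp [hb.ne']
  have ht : Tendsto (fun x => -Real.exp (-b * x) / b) atTop (𝓝 0) := by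
    have : Tendsto (fun x : ℝ => Real.exp (-b * x)) atTop (𝓝 0) :=
      Real.tendsto_exp_atBot.comp (tendsto_id.const_mul_atTop_of_neg (by linarith))
    simpa using (this.neg).div_const b
  have := integral_Ioi_of_hasDerivAt_of_tendsto' hderiv (exp_neg_integrableOn_Ioi c hb) ht
  rw [this]; field_simp; ring

lemma intOn_mul_exp {b : ℝ} (hb : 0 < b) :
    IntegrableOn (fun x => x * Real.exp (-b * x)) (Ioi (0:ℝ)) := by
  have := integrableOn_rpow_mul_exp_neg_mul_rpow (by norm_num : (-1:ℝ) < 1) (zero_lt_one' ℝ) hb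
  simpa [Real.rpow_one] using this

lemma integral_mul_exp {b : ℝ} (hb : 0 < b) :
    ∫ x in Ioi (0:ℝ), x * Real.exp (-b * x) = 1 / b ^ 2 := by
  have := Real.integral_rpow_mul_exp_neg_mul_Ioi (a := 2) (r := b) (by norm_num) hb
  rw [Real.Gamma_two] at this
  calc ∫ x in Ioi (0:ℝ), x * Real.exp (-b * x)
      = ∫ x in Ioi (0:ℝ), x ^ ((2:ℝ) - 1) * Real.exp (-(b * x)) := by
        refine setIntegral_congr_fun measurableSet_Ioi fun x hx => ?_
        rw [show (2:ℝ) - 1 = 1 by norm_num, Real.rpow_one, neg_mul]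
    _ = (1 / b) ^ (2:ℝ) * 1 := this
    _ = 1 / b ^ 2 := by
        rw [mul_one, show (2:ℝ) = ((2:ℕ):ℝ) by norm_num, Real.rpow_natCast, div_pow, one_pow]

lemma rho_intOn {t : ℝ} (ht : 0 < t) : IntegrableOn (rho t) (Ioi (0:ℝ)) := by
  have h : IntegrableOn (fun x => 4 / t ^ 2 * Real.exp (-(2/t) * x)) (Ioi (0:ℝ)) :=
    (exp_neg_integrableOn_Ioi 0 (by positivity)).const_mul _
  refine h.congr_fun (fun x _ => ?_) measurableSet_Ioi
  unfold rho; beta_reduce; rw [show -(2/t) * x = -2 * x / t by ring]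

lemma integral_rho {t : ℝ} (ht : 0 < t) : ∫ x in Ioi (0:ℝ), rho t x = 2 / t := by
  unfold rho
  calc ∫ x in Ioi (0:ℝ), 4 / t ^ 2 * Real.exp (-2 * x / t)
      = ∫ x in Ioi (0:ℝ), 4 / t ^ 2 * Real.exp (-(2/t) * x) := by
        refine setIntegral_congr_fun measurableSet_Ioi fun x _ => ?_
        rw [show -(2/t) * x = -2 * x / t by ring]
    _ = 4 / t ^ 2 * (Real.exp (-(2/t) * 0) / (2/t)) := by
        rw [MeasureTheory.integral_const_mul, integral_exp_Ioi (by positivity) 0]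
    _ = 2 / t := by
        rw [show -(2/t) * 0 = 0 by ring, Real.exp_zero]
        field_simp; ring

lemma integrable_dom {g h : ℝ → ℝ} (hg : AEStronglyMeasurable g (volume.restrict (Ioi 0)))
    (hh : IntegrableOn h (Ioi (0:ℝ))) (hb : ∀ x ∈ Ioi (0:ℝ), ‖g x‖ ≤ h x) :
    IntegrableOn g (Ioi (0:ℝ)) := by
  refine hh.mono' hg ?_
  filter_upwards [ae_restrict_mem measurableSet_Ioi] with x hx using hb x hx

lemma deriv_rho {s x : ℝ} (hs : 0 < s) :
    HasDerivAt (fun s => rho s x)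
      ((8 * x / s ^ 4 - 8 / s ^ 3) * Real.exp (-2 * x / s)) s := by
  have hs' : s ≠ 0 := hs.ne'
  have h1 : HasDerivAt (fun s : ℝ => -2 * x / s) (2 * x / s ^ 2) s := by
    have := (hasDerivAt_inv hs').const_mul (-2 * x)
    simp only [div_eq_mul_inv]
    refine this.congr_deriv ?_
    ring
  have h2 : HasDerivAt (fun s : ℝ => 4 / s ^ 2) (-8 / s ^ 3) s := by
    have := ((hasDerivAt_pow 2 s).inv (pow_ne_zero 2 hs')).const_mul 4
    simp only [div_eq_mul_inv]
    refine this.congr_deriv ?_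
    field_simp; ring
  have := h2.mul h1.exp
  unfold rho
  refine this.congr_deriv ?_
  field_simp; ring

lemma deriv_part {f : ℝ → ℝ} {C : ℝ}
    (hmeas : AEStronglyMeasurable f (volume.restrict (Ioi 0)))
    (hC : ∀ x ∈ Ioi (0:ℝ), |f x| ≤ C) (hC0 : 0 ≤ C) {t : ℝ} (ht : 0 < t) :
    HasDerivAt (fun s => ∫ x in Ioi (0:ℝ), rho s x * f x)
      (∫ x in Ioi (0:ℝ), ((8 * x / t ^ 4 - 8 / t ^ 3) * Real.exp (-2 * x / t)) * f x) t := by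
  have key := hasDerivAt_integral_of_dominated_loc_of_deriv_le
    (μ := volume.restrict (Ioi (0:ℝ)))
    (F := fun s x => rho s x * f x)
    (F' := fun s x => ((8 * x / s ^ 4 - 8 / s ^ 3) * Real.exp (-2 * x / s)) * f x)
    (x₀ := t)
    (bound := fun x => C * ((128 * x / t ^ 4 + 64 / t ^ 3) * Real.exp (-(1/t) * x)))
    (s := Metric.ball t (t / 2)) (Metric.ball_mem_nhds t (by positivity))
    (Eventually.of_forall fun s => ((rho_meas s).aestronglyMeasurable.mul hmeas))
    ?hint ?h'meas ?hbound ?hbint ?hdiff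
  · exact key.2
  case hint =>
    exact integrable_dom ((rho_meas t).aestronglyMeasurable.mul hmeas)
      ((rho_intOn ht).const_mul C) (fun x hx => by
        rw [norm_mul, Real.norm_eq_abs, Real.norm_eq_abs, abs_of_nonneg (rho_nonneg t x),
          mul_comm C]
        exact mul_le_mul_of_nonneg_left (hC x hx) (rho_nonneg t x))
  case h'meas =>
    exact (((measurable_id.const_mul _ |>.div_const _ |>.sub measurable_const).mul
      (by fun_prop : Measurable fun x : ℝ => Real.exp (-2 * x / t))).aestronglyMeasurable.mul hmeas)
  case hbound =>
    filter_upwards [ae_restrict_mem measurableSet_Ioi] with x hx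
    intro s hsb
    have hx0 : (0:ℝ) < x := hx
    rw [Metric.mem_ball, Real.dist_eq, abs_lt] at hsb
    have hs1 : t / 2 < s := by linarith
    have hs2 : s < 3 * t / 2 := by linarith
    have hs0 : 0 < s := by linarith
    rw [norm_mul, Real.norm_eq_abs, Real.norm_eq_abs, abs_mul,
      abs_of_nonneg (Real.exp_nonneg _)]
    have hexp : Real.exp (-2 * x / s) ≤ Real.exp (-(1/t) * x) := by
      apply Real.exp_le_exp.2
      rw [div_le_iff₀ hs0, show -(1/t) * x * s = -(x * s) / t by ring, le_div_iff₀ ht]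
      nlinarith [mul_le_mul_of_nonneg_left (show s ≤ 2 * t by linarith) hx0.le]
    have habs : |8 * x / s ^ 4 - 8 / s ^ 3| ≤ 128 * x / t ^ 4 + 64 / t ^ 3 := by
      refine (abs_sub _ _).trans ?_
      rw [abs_of_nonneg (by positivity), abs_of_nonneg (by positivity)]
      have h4 : t ^ 4 / 16 ≤ s ^ 4 := by
        nlinarith [pow_le_pow_left₀ (by positivity : (0:ℝ) ≤ t/2) hs1.le 4]
      have h3 : t ^ 3 / 8 ≤ s ^ 3 := by
        nlinarith [pow_le_pow_left₀ (by positivity : (0:ℝ) ≤ t/2) hs1.le 3]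
      have e1 : 8 * x / s ^ 4 ≤ 128 * x / t ^ 4 := by
        rw [div_le_div_iff₀ (by positivity) (by positivity)]; nlinarith
      have e2 : 8 / s ^ 3 ≤ 64 / t ^ 3 := by
        rw [div_le_div_iff₀ (by positivity) (by positivity)]; nlinarith
      exact add_le_add e1 e2
    calc |8 * x / s ^ 4 - 8 / s ^ 3| * Real.exp (-2 * x / s) * |f x|
        ≤ (128 * x / t ^ 4 + 64 / t ^ 3) * Real.exp (-(1/t) * x) * C := by
          apply mul_le_mul _ (hC x hx) (abs_nonneg _) (by positivity)
          exact mul_le_mul habs hexp (Real.exp_nonneg _) (by positivity)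
      _ = C * ((128 * x / t ^ 4 + 64 / t ^ 3) * Real.exp (-(1/t) * x)) := by ring
  case hbint =>
    have h1 : IntegrableOn (fun x => 128 / t ^ 4 * (x * Real.exp (-(1/t) * x))) (Ioi (0:ℝ)) :=
      (intOn_mul_exp (by positivity)).const_mul _
    have h2 : IntegrableOn (fun x => 64 / t ^ 3 * Real.exp (-(1/t) * x)) (Ioi (0:ℝ)) :=
      (exp_neg_integrableOn_Ioi 0 (by positivity)).const_mul _
    have h3 : IntegrableOn (fun x => C * (128 / t ^ 4 * (x * Real.exp (-(1/t) * x)))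
        + C * (64 / t ^ 3 * Real.exp (-(1/t) * x))) (Ioi (0:ℝ)) :=
      (h1.const_mul C).add (h2.const_mul C)
    refine h3.congr_fun (fun x _ => by ring) measurableSet_Ioi
  case hdiff =>
    refine Eventually.of_forall fun x => fun s hsb => ?_
    rw [Metric.mem_ball, Real.dist_eq, abs_lt] at hsb
    exact (deriv_rho (by linarith : 0 < s)).mul_const (f x)

lemma rho_mul_add (t x y : ℝ) :
    rho t x * rho t y = 16 / t ^ 4 * Real.exp (-2 * (x + y) / t) := by
  unfold rho
  rw [mul_mul_mul_comm, ← Real.exp_add]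
  congr 1
  · ring
  · congr 1; ring

lemma integrable_rho_mul {f : ℝ → ℝ} {C : ℝ}
    (hmeas : AEStronglyMeasurable f (volume.restrict (Ioi 0)))
    (hC : ∀ x ∈ Ioi (0:ℝ), |f x| ≤ C) {t : ℝ} (ht : 0 < t) :
    Integrable (fun x => rho t x * f x) (volume.restrict (Ioi 0)) := by
  refine integrable_dom ((rho_meas t).aestronglyMeasurable.mul hmeas)
    ((rho_intOn ht).const_mul C) (fun x hx => ?_)
  rw [norm_mul, Real.norm_eq_abs, Real.norm_eq_abs, abs_of_nonneg (rho_nonneg t x), mul_comm C]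
  exact mul_le_mul_of_nonneg_left (hC x hx) (rho_nonneg t x)

lemma G_integrable {f : ℝ → ℝ} {C : ℝ} (hf_cont : ContinuousOn f (Ioi 0))
    (hC : ∀ x ∈ Ioi (0:ℝ), |f x| ≤ C) {t : ℝ} (ht : 0 < t) :
    Integrable (fun p : ℝ × ℝ => rho t p.1 * rho t p.2 * f (p.1 + p.2))
      ((volume.restrict (Ioi 0)).prod (volume.restrict (Ioi 0))) := by
  set μ := volume.restrict (Ioi (0:ℝ)) with hμ
  set G : ℝ × ℝ → ℝ := fun p => rho t p.1 * rho t p.2 * f (p.1 + p.2) with hG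
  have hprodmeas : μ.prod μ = (volume.prod volume).restrict ((Ioi 0) ×ˢ (Ioi 0)) :=
    Measure.prod_restrict _ _
  have hGasm : AEStronglyMeasurable G (μ.prod μ) := by
    rw [hprodmeas]
    refine AEStronglyMeasurable.mul ?_ ?_
    · exact (((rho_meas t).comp measurable_fst).mul
        ((rho_meas t).comp measurable_snd)).aestronglyMeasurable
    · exact (hf_cont.comp continuous_add.continuousOn
        (fun p hp => mem_Ioi.2 (add_pos (mem_Ioi.1 hp.1) (mem_Ioi.1 hp.2)))).aestronglyMeasurable
        (measurableSet_Ioi.prod measurableSet_Ioi)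
  refine Integrable.mono' ((Integrable.mul_prod (rho_intOn ht) (rho_intOn ht)).const_mul C) hGasm ?_
  have hmem : ∀ᵐ p ∂(μ.prod μ), p ∈ (Ioi (0:ℝ)) ×ˢ (Ioi (0:ℝ)) := by
    rw [hprodmeas]; exact ae_restrict_mem (measurableSet_Ioi.prod measurableSet_Ioi)
  filter_upwards [hmem] with p hp
  have hr : (0:ℝ) ≤ rho t p.1 * rho t p.2 := mul_nonneg (rho_nonneg _ _) (rho_nonneg _ _)
  calc ‖G p‖ = rho t p.1 * rho t p.2 * |f (p.1 + p.2)| := by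
        rw [Real.norm_eq_abs, hG, abs_mul, abs_of_nonneg hr]
    _ ≤ rho t p.1 * rho t p.2 * C :=
        mul_le_mul_of_nonneg_left (hC _ (mem_Ioi.2 (add_pos (mem_Ioi.1 hp.1) (mem_Ioi.1 hp.2)))) hr
    _ = C * (rho t p.1 * rho t p.2) := by ring

lemma T_eq {f : ℝ → ℝ} {C : ℝ} (hf_cont : ContinuousOn f (Ioi 0))
    (hC : ∀ x ∈ Ioi (0:ℝ), |f x| ≤ C) {t : ℝ} (ht : 0 < t) :
    ∫ x in Ioi (0:ℝ), ∫ y in Ioi (0:ℝ), rho t x * rho t y * f (x + y)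
      = ∫ z in Ioi (0:ℝ), z * (16 / t ^ 4 * Real.exp (-2 * z / t) * f z) := by
  have hmeas : AEStronglyMeasurable f (volume.restrict (Ioi 0)) :=
    hf_cont.aestronglyMeasurable measurableSet_Ioi
  set μ := volume.restrict (Ioi (0:ℝ)) with hμ
  set G : ℝ × ℝ → ℝ := fun p => rho t p.1 * rho t p.2 * f (p.1 + p.2) with hG
  set Hfun : ℝ × ℝ → ℝ := fun p => {q : ℝ × ℝ | 0 < q.1 ∧ q.1 < q.2}.indicator
    (fun q => 16 / t ^ 4 * Real.exp (-2 * q.2 / t) * f q.2) p with hH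
  have hprodmeas : μ.prod μ = (volume.prod volume).restrict ((Ioi 0) ×ˢ (Ioi 0)) :=
    Measure.prod_restrict _ _
  have hGint : Integrable G (μ.prod μ) := G_integrable hf_cont hC ht
  have hφ : MeasurePreserving (fun p : ℝ × ℝ => (p.1, p.1 + p.2))
      ((volume : Measure ℝ).prod volume) ((volume : Measure ℝ).prod volume) :=
    measurePreserving_prod_add volume volume
  have hemb : MeasurableEmbedding (fun p : ℝ × ℝ => (p.1, p.1 + p.2)) :=
    (MeasurableEquiv.shearAddRight ℝ).measurableEmbedding
  have hcomp : ∀ p : ℝ × ℝ, Hfun (p.1, p.1 + p.2) = ((Ioi 0 ×ˢ Ioi 0).indicator G) p := by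
    intro p
    simp only [hH, hG, Set.indicator_apply, Set.mem_setOf_eq, Set.mem_prod, Set.mem_Ioi]
    have hiff : (0 < p.1 ∧ p.1 < p.1 + p.2) ↔ (0 < p.1 ∧ 0 < p.2) :=
      and_congr_right fun _ => by constructor <;> intro <;> linarith
    simp only [hiff]
    split_ifs with h
    · rw [rho_mul_add]
    · rfl
  have hGres : Integrable ((Ioi (0:ℝ) ×ˢ Ioi (0:ℝ)).indicator G) ((volume : Measure ℝ).prod volume) := by
    rw [integrable_indicator_iff (measurableSet_Ioi.prod measurableSet_Ioi), IntegrableOn,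
      ← hprodmeas]
    exact hGint
  have hHint : Integrable Hfun ((volume : Measure ℝ).prod volume) := by
    rw [← hφ.integrable_comp_emb hemb]
    have : (Hfun ∘ fun p : ℝ × ℝ => (p.1, p.1 + p.2)) = (Ioi 0 ×ˢ Ioi 0).indicator G :=
      funext hcomp
    rw [this]; exact hGres
  have hTs : ∫ x in Ioi (0:ℝ), ∫ y in Ioi (0:ℝ), rho t x * rho t y * f (x + y)
      = ∫ p, Hfun p ∂((volume : Measure ℝ).prod volume) := by
    calc ∫ x in Ioi (0:ℝ), ∫ y in Ioi (0:ℝ), rho t x * rho t y * f (x + y)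
        = ∫ p, G p ∂(μ.prod μ) := integral_integral hGint
      _ = ∫ p, ((Ioi 0 ×ˢ Ioi 0).indicator G) p ∂((volume : Measure ℝ).prod volume) := by
          rw [hprodmeas, integral_indicator (measurableSet_Ioi.prod measurableSet_Ioi)]
      _ = ∫ p, Hfun (p.1, p.1 + p.2) ∂((volume : Measure ℝ).prod volume) := by
          simp_rw [hcomp]
      _ = ∫ p, Hfun p ∂((volume : Measure ℝ).prod volume) :=
          hφ.integral_comp hemb Hfun
  have hinner : ∀ z : ℝ, ∫ x, Hfun (x, z)
      = max z 0 * (16 / t ^ 4 * Real.exp (-2 * z / t) * f z) := by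
    intro z
    have heq : (fun x => Hfun (x, z))
        = (Ioo (0:ℝ) z).indicator (fun _ => 16 / t ^ 4 * Real.exp (-2 * z / t) * f z) := by
      funext x
      simp [hH, Set.indicator_apply, Set.mem_Ioo, Set.mem_setOf_eq]
    rw [heq, integral_indicator_const _ measurableSet_Ioo, Real.volume_real_Ioo, smul_eq_mul,
      sub_zero]
  rw [hTs, integral_prod_symm Hfun hHint]
  simp_rw [hinner]
  rw [← integral_indicator measurableSet_Ioi]
  congr 1
  funext z
  by_cases hz : z ∈ Ioi (0:ℝ)
  · rw [Set.indicator_of_mem hz, max_eq_left (le_of_lt (mem_Ioi.1 hz))]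
  · rw [Set.indicator_of_notMem hz,
      max_eq_right (not_lt.1 fun h => hz (mem_Ioi.2 h)), zero_mul]

lemma rhs_eq {f : ℝ → ℝ} {C : ℝ} (hf_cont : ContinuousOn f (Ioi 0))
    (hC : ∀ x ∈ Ioi (0:ℝ), |f x| ≤ C) {t : ℝ} (ht : 0 < t) :
    (1 / 2) * ∫ x, (∫ y, (f (x + y) - f x - f y) ∂(fellerLevyMeasure t)) ∂(fellerLevyMeasure t)
      = ∫ x in Ioi (0:ℝ), ((8 * x / t ^ 4 - 8 / t ^ 3) * Real.exp (-2 * x / t)) * f x := by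
  have hmeas : AEStronglyMeasurable f (volume.restrict (Ioi 0)) :=
    hf_cont.aestronglyMeasurable measurableSet_Ioi
  have hMint : Integrable (fun x => rho t x * f x) (volume.restrict (Ioi 0)) :=
    integrable_rho_mul hmeas hC ht
  set M : ℝ := ∫ x in Ioi (0:ℝ), rho t x * f x with hM
  have hfx : ∀ x : ℝ, 0 < x → AEStronglyMeasurable (fun y => f (x + y))
      (volume.restrict (Ioi 0)) := fun x hx =>
    (hf_cont.comp (continuous_const.add continuous_id).continuousOn
      (fun y hy => mem_Ioi.2 (add_pos hx (mem_Ioi.1 hy)))).aestronglyMeasurable measurableSet_Ioi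
  have hia : ∀ x : ℝ, 0 < x → Integrable (fun y => rho t y * f (x + y))
      (volume.restrict (Ioi 0)) := fun x hx =>
    integrable_rho_mul (hfx x hx) (fun y hy => hC _ (mem_Ioi.2 (add_pos hx (mem_Ioi.1 hy)))) ht
  have step1 : ∀ x ∈ Ioi (0:ℝ), (∫ y, (f (x + y) - f x - f y) ∂(fellerLevyMeasure t))
      = (∫ y in Ioi (0:ℝ), rho t y * f (x + y)) - 2 / t * f x - M := by
    intro x hx
    have hx0 : (0:ℝ) < x := hx
    have hib : Integrable (fun y => rho t y * f x) (volume.restrict (Ioi 0)) :=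
      (rho_intOn ht).mul_const _
    rw [integral_feller]
    calc ∫ y in Ioi (0:ℝ), rho t y * (f (x + y) - f x - f y)
        = ∫ y in Ioi (0:ℝ), (rho t y * f (x + y) - rho t y * f x - rho t y * f y) :=
          setIntegral_congr_fun measurableSet_Ioi fun y _ => by ring
      _ = (∫ y in Ioi (0:ℝ), rho t y * f (x + y)) - (∫ y in Ioi (0:ℝ), rho t y * f x) - M := by
          have hsub : Integrable (fun y => rho t y * f (x + y) - rho t y * f x)
              (volume.restrict (Ioi 0)) := (hia x hx0).sub hib
          rw [integral_sub hsub hMint, integral_sub (hia x hx0) hib]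
      _ = (∫ y in Ioi (0:ℝ), rho t y * f (x + y)) - 2 / t * f x - M := by
          rw [integral_mul_const, integral_rho ht]
  have houter : ∫ x, (∫ y, (f (x + y) - f x - f y) ∂(fellerLevyMeasure t)) ∂(fellerLevyMeasure t)
      = ∫ x in Ioi (0:ℝ), ((∫ y in Ioi (0:ℝ), rho t x * rho t y * f (x + y))
          - 2 / t * (rho t x * f x) - M * rho t x) := by
    rw [integral_feller]
    refine setIntegral_congr_fun measurableSet_Ioi fun x hx => ?_
    rw [step1 x hx]
    have : ∫ y in Ioi (0:ℝ), rho t x * rho t y * f (x + y)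
        = rho t x * ∫ y in Ioi (0:ℝ), rho t y * f (x + y) := by
      rw [← MeasureTheory.integral_const_mul]
      exact setIntegral_congr_fun measurableSet_Ioi fun y _ => by ring
    rw [this]; ring
  have h1 : Integrable (fun x => ∫ y in Ioi (0:ℝ), rho t x * rho t y * f (x + y))
      (volume.restrict (Ioi 0)) := (G_integrable hf_cont hC ht).integral_prod_left
  have h2 : Integrable (fun x => 2 / t * (rho t x * f x)) (volume.restrict (Ioi 0)) :=
    hMint.const_mul _
  have h3 : Integrable (fun x => M * rho t x) (volume.restrict (Ioi 0)) :=
    (rho_intOn ht).const_mul _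
  have hsplit : ∫ x, (∫ y, (f (x + y) - f x - f y) ∂(fellerLevyMeasure t)) ∂(fellerLevyMeasure t)
      = (∫ x in Ioi (0:ℝ), ∫ y in Ioi (0:ℝ), rho t x * rho t y * f (x + y))
        - 2 / t * M - M * (2 / t) := by
    have hsub2 : Integrable (fun x => (∫ y in Ioi (0:ℝ), rho t x * rho t y * f (x + y))
        - 2 / t * (rho t x * f x)) (volume.restrict (Ioi 0)) := h1.sub h2
    rw [houter, integral_sub hsub2 h3, integral_sub h1 h2,
      MeasureTheory.integral_const_mul, MeasureTheory.integral_const_mul, integral_rho ht]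
  have hq : Integrable (fun z => z * (16 / t ^ 4 * Real.exp (-2 * z / t) * f z))
      (volume.restrict (Ioi 0)) := by
    refine integrable_dom
      (measurable_id.aestronglyMeasurable.mul
        (((by fun_prop : Measurable fun z : ℝ => 16 / t ^ 4 * Real.exp (-2 * z / t))).aestronglyMeasurable.mul hmeas))
      ((intOn_mul_exp (show (0:ℝ) < 2 / t by positivity)).const_mul (16 / t ^ 4 * C))
      (fun z hz => ?_)
    have hz0 : (0:ℝ) ≤ z := (mem_Ioi.1 hz).le
    have e1 : ‖z * (16 / t ^ 4 * Real.exp (-2 * z / t) * f z)‖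
        = z * (16 / t ^ 4 * Real.exp (-2 * z / t)) * |f z| := by
      rw [Real.norm_eq_abs, abs_mul, abs_mul, abs_of_nonneg hz0,
        abs_of_nonneg (by positivity : (0:ℝ) ≤ 16 / t ^ 4 * Real.exp (-2 * z / t))]
      ring
    rw [e1]
    calc z * (16 / t ^ 4 * Real.exp (-2 * z / t)) * |f z|
        ≤ z * (16 / t ^ 4 * Real.exp (-2 * z / t)) * C :=
          mul_le_mul_of_nonneg_left (hC z hz) (by positivity)
      _ = 16 / t ^ 4 * C * (z * Real.exp (-(2 / t) * z)) := by
          rw [show -(2 / t) * z = -2 * z / t by ring]; ring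
  rw [hsplit, T_eq hf_cont hC ht]
  have hD : ∫ x in Ioi (0:ℝ), ((8 * x / t ^ 4 - 8 / t ^ 3) * Real.exp (-2 * x / t)) * f x
      = (1 / 2) * (∫ z in Ioi (0:ℝ), z * (16 / t ^ 4 * Real.exp (-2 * z / t) * f z))
        - 2 / t * M := by
    rw [← MeasureTheory.integral_const_mul, ← MeasureTheory.integral_const_mul (2 / t),
      ← integral_sub (hq.const_mul (1 / 2)) (hMint.const_mul (2 / t))]
    refine setIntegral_congr_fun measurableSet_Ioi fun x _ => ?_
    unfold rho
    ring
  rw [hD]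
  ring

/-- The family `μ_t(dx) = (4/t²) e^{-2x/t} dx` solves
Smoluchowski's coagulation equation with constant kernel `K ≡ 1`: for every
bounded continuous `f : (0,∞) → ℝ`, the map `t ↦ ∫ f dμ_t` is differentiable
on `(0,∞)` with derivative `(1/2) ∫∫ (f(x+y) - f(x) - f(y)) μ_t(dx) μ_t(dy)`. -/
theorem stmt10
    (f : ℝ → ℝ) (hf_cont : ContinuousOn f (Set.Ioi 0))
    (hf_bdd : ∃ C : ℝ, ∀ x ∈ Set.Ioi (0 : ℝ), |f x| ≤ C) :
    ∀ t : ℝ, 0 < t →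
      HasDerivAt (fun s : ℝ => ∫ x, f x ∂(fellerLevyMeasure s))
        ((1 / 2) *
          ∫ x, (∫ y, (f (x + y) - f x - f y) ∂(fellerLevyMeasure t))
            ∂(fellerLevyMeasure t)) t := by
  intro t ht
  obtain ⟨C, hC⟩ := hf_bdd
  have hC0 : 0 ≤ C := le_trans (abs_nonneg _) (hC 1 (mem_Ioi.2 one_pos))
  have hmeas : AEStronglyMeasurable f (volume.restrict (Ioi 0)) :=
    hf_cont.aestronglyMeasurable measurableSet_Ioi
  have hd := deriv_part hmeas hC hC0 ht
  have heq := rhs_eq hf_cont hC ht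
  rw [heq]
  have hfun : (fun s : ℝ => ∫ x, f x ∂(fellerLevyMeasure s))
      = fun s : ℝ => ∫ x in Ioi (0:ℝ), rho s x * f x :=
    funext fun s => integral_feller s f
  rw [hfun]
  exact hd
end

section
/- Let h : ℝ → ℝ be nondecreasing, 1-Lipschitz, with |h(x)| ≤ min(|x|, 1) for all x and h(x) = x for |x| ≤ δ for some δ > 0. Let π be a Borel measure on (0,∞) with ∫ min(r, r²) π(dr) < ∞, and for each a > 0 let ν^{(a)} be a Borel measure on (0,∞) supported on (0,a] with ∫ r² ν^{(a)}(dr) < ∞, satisfying Assumption (H): min(r, r²) ν^{(a)}(dr) converges weakly, as finite measures, to min(r, r²) π(dr) as a → ∞. For 0 ≤ y ≤ a define β_a(y) = −∫ ν^{(a)}(dr) ∫_0^a du [ r(1_{u ≤ y} − y/a) − h(r(1_{u ≤ y} − y/a)) ]. Then: (i) |β_a(y)| ≤ 2 y ∫ ν^{(a)}(dr) r 1_{r > δ} for every 0 ≤ y ≤ a; and (ii) for every M > 0, sup_{0 ≤ y ≤ M} | β_a(y) + y ∫ π(dr) (r − h(r)) | → 0 as a → ∞. -/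
open MeasureTheory Filter

private lemma F_abs_le {δ : ℝ} (hδ : 0 < δ) {h : ℝ → ℝ} (h_mono : Monotone h)
    (h_bdd : ∀ x : ℝ, |h x| ≤ min |x| 1) (h_id : ∀ x : ℝ, |x| ≤ δ → h x = x)
    (x : ℝ) : |x - h x| ≤ |x| := by
  have h0 : h 0 = 0 := h_id 0 (by simp [hδ.le])
  have habs : |h x| ≤ |x| := (h_bdd x).trans (min_le_left _ _)
  rcases le_total 0 x with hx | hx
  · have h1 : 0 ≤ h x := h0 ▸ h_mono hx
    have h2 : h x ≤ x := (le_abs_self _).trans (habs.trans_eq (abs_of_nonneg hx))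
    rw [abs_of_nonneg (by linarith), abs_of_nonneg hx]; linarith
  · have h1 : h x ≤ 0 := h0 ▸ h_mono hx
    have h2 : x ≤ h x := by
      have := (neg_abs_le (h x)); have := habs; have := abs_of_nonpos hx; linarith [neg_abs_le (h x)]
    rw [abs_of_nonpos (by linarith), abs_of_nonpos hx]; linarith

private lemma F_zero {δ : ℝ} {h : ℝ → ℝ} (h_id : ∀ x : ℝ, |x| ≤ δ → h x = x)
    {x : ℝ} (hx : |x| ≤ δ) : x - h x = 0 := by rw [h_id x hx, sub_self]

private lemma F_sq_le {δ : ℝ} (hδ : 0 < δ) {h : ℝ → ℝ} (h_mono : Monotone h)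
    (h_bdd : ∀ x : ℝ, |h x| ≤ min |x| 1) (h_id : ∀ x : ℝ, |x| ≤ δ → h x = x)
    (x : ℝ) : |x - h x| ≤ (1/δ) * x ^ 2 := by
  rcases le_or_gt |x| δ with hx | hx
  · rw [F_zero h_id hx]; simp; positivity
  · refine (F_abs_le hδ h_mono h_bdd h_id x).trans ?_
    have h2 : |x| * |x| = x ^ 2 := by rw [← abs_mul, ← sq, abs_sq]
    rw [div_mul_eq_mul_div, le_div_iff₀ hδ, one_mul, ← h2]
    nlinarith [abs_nonneg x]
  
private lemma F_lip2 {h : ℝ → ℝ} (h_lip : LipschitzWith 1 h) (x z : ℝ) :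
    |(x - h x) - (z - h z)| ≤ 2 * |x - z| := by
  have hd := h_lip.dist_le_mul x z
  rw [Real.dist_eq, Real.dist_eq] at hd
  norm_num at hd
  have e : (x - h x) - (z - h z) = (x - z) - (h x - h z) := by ring
  rw [e]
  calc |(x - z) - (h x - h z)| ≤ |x - z| + |h x - h z| := abs_sub _ _
    _ ≤ 2 * |x - z| := by linarith


private lemma inner_eq (h : ℝ → ℝ) {a y : ℝ} (hy0 : 0 ≤ y) (hya : y ≤ a) (r : ℝ) :
    (∫ u in Set.Ioc (0 : ℝ) a,
      (r * ((if u ≤ y then (1 : ℝ) else 0) - y / a)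
        - h (r * ((if u ≤ y then (1 : ℝ) else 0) - y / a))))
    = y * (r * (1 - y / a) - h (r * (1 - y / a)))
      + (a - y) * (r * (0 - y / a) - h (r * (0 - y / a))) := by
  have hsplit : Set.Ioc (0 : ℝ) a = Set.Ioc 0 y ∪ Set.Ioc y a :=
    (Set.Ioc_union_Ioc_eq_Ioc hy0 hya).symm
  have hd : Disjoint (Set.Ioc (0 : ℝ) y) (Set.Ioc y a) := Set.Ioc_disjoint_Ioc_of_le le_rfl
  set f : ℝ → ℝ := fun u =>
      (r * ((if u ≤ y then (1 : ℝ) else 0) - y / a)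
        - h (r * ((if u ≤ y then (1 : ℝ) else 0) - y / a))) with hf
  have e1 : Set.EqOn f (fun _ => r * (1 - y / a) - h (r * (1 - y / a))) (Set.Ioc 0 y) := by
    intro u hu; simp only [hf, if_pos hu.2]
  have e2 : Set.EqOn f (fun _ => r * (0 - y / a) - h (r * (0 - y / a))) (Set.Ioc y a) := by
    intro u hu; simp only [hf, if_neg (not_le.2 hu.1)]
  have i1 : IntegrableOn f (Set.Ioc 0 y) volume :=
    (integrableOn_const measure_Ioc_lt_top.ne).congr_fun
      (fun u hu => (e1 hu).symm) measurableSet_Ioc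
  have i2 : IntegrableOn f (Set.Ioc y a) volume :=
    (integrableOn_const measure_Ioc_lt_top.ne).congr_fun
      (fun u hu => (e2 hu).symm) measurableSet_Ioc
  rw [show (∫ u in Set.Ioc (0 : ℝ) a,
      (r * ((if u ≤ y then (1 : ℝ) else 0) - y / a)
        - h (r * ((if u ≤ y then (1 : ℝ) else 0) - y / a)))) = ∫ u in Set.Ioc (0:ℝ) a, f u from rfl,
    hsplit, setIntegral_union hd measurableSet_Ioc i1 i2,
    setIntegral_congr_fun measurableSet_Ioc e1, setIntegral_congr_fun measurableSet_Ioc e2,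
    setIntegral_const, setIntegral_const, measureReal_def, measureReal_def, Real.volume_Ioc, Real.volume_Ioc,
    ENNReal.toReal_ofReal (by linarith), ENNReal.toReal_ofReal (by linarith),
    smul_eq_mul, smul_eq_mul, sub_zero]

private lemma integrable_of_sq_bound {μ : Measure ℝ}
    (hmom : ∫⁻ r, ENNReal.ofReal (r ^ 2) ∂μ < ⊤)
    {g : ℝ → ℝ} (hg : AEStronglyMeasurable g μ) {C : ℝ} (hC : 0 ≤ C)
    (hb : ∀ᵐ r ∂μ, |g r| ≤ C * r ^ 2) : Integrable g μ := by
  refine ⟨hg, ?_⟩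
  rw [HasFiniteIntegral]
  calc ∫⁻ r, ‖g r‖₊ ∂μ ≤ ∫⁻ r, ENNReal.ofReal (C * r ^ 2) ∂μ := by
        refine lintegral_mono_ae (hb.mono fun r hr => ?_)
        change ‖g r‖ₑ ≤ _
        rw [Real.enorm_eq_ofReal_abs]
        exact ENNReal.ofReal_le_ofReal hr
    _ = ENNReal.ofReal C * ∫⁻ r, ENNReal.ofReal (r ^ 2) ∂μ := by
        rw [← lintegral_const_mul'' _ (by fun_prop)]
        simp_rw [← ENNReal.ofReal_mul hC]
    _ < ⊤ := ENNReal.mul_lt_top ENNReal.ofReal_lt_top hmom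


/-- The drift characteristic (with truncation function `h`) of the rescaled
generalized Fleming-Viot process associated with the measure `ν` on `(0,a]`:
`β_a(y) = -∫ ν(dr) ∫_0^a du [ r(1_{u≤y} - y/a) - h(r(1_{u≤y} - y/a)) ]`. -/
noncomputable def betaChar (h : ℝ → ℝ) (ν : Measure ℝ) (a y : ℝ) : ℝ :=
  -∫ r, (∫ u in Set.Ioc (0 : ℝ) a,
      (r * ((if u ≤ y then (1 : ℝ) else 0) - y / a)
        - h (r * ((if u ≤ y then (1 : ℝ) else 0) - y / a)))) ∂ν

set_option maxHeartbeats 1000000 in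
/-- With `h` a truncation function and `(ν^{(a)})` satisfying
Assumption (H): (i) `|β_a(y)| ≤ 2y ∫ r 1_{r>δ} ν^{(a)}(dr)` for `0 ≤ y ≤ a`;
(ii) `β_a(y) → -y ∫ (r - h(r)) π(dr)` uniformly on `0 ≤ y ≤ M` as `a → ∞`. -/
theorem stmt12
    (δ : ℝ) (hδ : 0 < δ) (h : ℝ → ℝ)
    (h_mono : Monotone h) (h_lip : LipschitzWith 1 h)
    (h_bdd : ∀ x : ℝ, |h x| ≤ min |x| 1)
    (h_id : ∀ x : ℝ, |x| ≤ δ → h x = x)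
    (π : Measure ℝ) (hπsupp : π (Set.Ioi 0)ᶜ = 0)
    (hπmom : ∫⁻ r, ENNReal.ofReal (min r (r ^ 2)) ∂π < ⊤)
    (ν : ℝ → Measure ℝ)
    (hνsupp : ∀ a : ℝ, 0 < a → (ν a) (Set.Ioc 0 a)ᶜ = 0)
    (hνmom : ∀ a : ℝ, 0 < a → ∫⁻ r, ENNReal.ofReal (r ^ 2) ∂(ν a) < ⊤)
    (hH : ∀ f : ℝ → ℝ, ContinuousOn f (Set.Ioi 0) →
      (∃ C : ℝ, ∀ x ∈ Set.Ioi (0 : ℝ), |f x| ≤ C) →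
      Tendsto (fun a => ∫ r in Set.Ioi (0 : ℝ), f r * min r (r ^ 2) ∂(ν a))
        atTop
        (nhds (∫ r in Set.Ioi (0 : ℝ), f r * min r (r ^ 2) ∂π))) :
    (∀ a : ℝ, 0 < a → ∀ y : ℝ, 0 ≤ y → y ≤ a →
      |betaChar h (ν a) a y| ≤ 2 * y * ∫ r in Set.Ioi δ, r ∂(ν a)) ∧
    (∀ M : ℝ, 0 < M →
      Tendsto
        (fun a : ℝ => ⨆ y ∈ Set.Icc (0 : ℝ) M,
          |betaChar h (ν a) a y + y * ∫ r in Set.Ioi (0 : ℝ), (r - h r) ∂π|)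
        atTop (nhds 0)) := by
  have hFsq := F_sq_le hδ h_mono h_bdd h_id
  have hFle := F_abs_le hδ h_mono h_bdd h_id
  have hFzero : ∀ x : ℝ, |x| ≤ δ → x - h x = 0 := fun x hx => F_zero h_id hx
  have hcont : Continuous (fun x : ℝ => x - h x) := continuous_id.sub h_lip.continuous
  have hae : ∀ a : ℝ, 0 < a → ∀ᵐ r ∂(ν a), r ∈ Set.Ioc 0 a := by
    intro a ha
    rw [ae_iff]
    exact hνsupp a ha
  -- integrability of r ↦ F (r * k)
  have hInt : ∀ a : ℝ, 0 < a → ∀ k : ℝ, |k| ≤ 1 →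
      Integrable (fun r => r * k - h (r * k)) (ν a) := by
    intro a ha k hk
    refine integrable_of_sq_bound (hνmom a ha)
      ((hcont.comp (continuous_id.mul continuous_const)).aestronglyMeasurable)
      (by positivity : (0:ℝ) ≤ 1/δ) (.of_forall fun r => ?_)
    refine (hFsq _).trans ?_
    have hk1 := abs_le.1 hk
    have hk2 : k ^ 2 ≤ 1 := by nlinarith [hk1.1, hk1.2]
    have h2 : (r * k) ^ 2 ≤ r ^ 2 := by
      calc (r * k) ^ 2 = r ^ 2 * k ^ 2 := by ring
        _ ≤ r ^ 2 * 1 := mul_le_mul_of_nonneg_left hk2 (sq_nonneg r)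
        _ = r ^ 2 := mul_one _
    gcongr
  -- integrability of the indicator of (δ, ∞) times id
  have hIndInt : ∀ a : ℝ, 0 < a → Integrable (Set.indicator (Set.Ioi δ) id) (ν a) := by
    intro a ha
    refine integrable_of_sq_bound (hνmom a ha)
      ((measurable_id.indicator measurableSet_Ioi).aestronglyMeasurable)
      (by positivity : (0:ℝ) ≤ 1/δ) (.of_forall fun r => ?_)
    by_cases hr : r ∈ Set.Ioi δ
    · rw [Set.indicator_of_mem hr]
      have hr' : δ < r := hr
      simp only [id]
      rw [abs_of_pos (hδ.trans hr')]
      rw [div_mul_eq_mul_div, le_div_iff₀ hδ, one_mul]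
      nlinarith
    · rw [Set.indicator_of_notMem hr]
      simp only [abs_zero]
      positivity
  have hRδpos : ∀ a : ℝ, 0 ≤ ∫ r in Set.Ioi δ, r ∂(ν a) := fun a =>
    setIntegral_nonneg measurableSet_Ioi (fun r hr => le_of_lt (hδ.trans hr))
  have hIndEq : ∀ a : ℝ, ∫ r, Set.indicator (Set.Ioi δ) id r ∂(ν a)
      = ∫ r in Set.Ioi δ, r ∂(ν a) := fun a => integral_indicator measurableSet_Ioi
  -- key decomposition of betaChar
  have key : ∀ a : ℝ, 0 < a → ∀ y : ℝ, 0 ≤ y → y ≤ a →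
      betaChar h (ν a) a y =
        -(y * (∫ r, (r * (1 - y/a) - h (r * (1 - y/a))) ∂(ν a))
          + (a - y) * (∫ r, (r * (0 - y/a) - h (r * (0 - y/a))) ∂(ν a))) := by
    intro a ha y hy0 hya
    have ht0 : 0 ≤ y / a := div_nonneg hy0 ha.le
    have ht1 : y / a ≤ 1 := (div_le_one ha).2 hya
    have i1 : Integrable (fun r => r * (1 - y/a) - h (r * (1 - y/a))) (ν a) :=
      hInt a ha _ (by rw [abs_of_nonneg (by linarith)]; linarith)
    have i2 : Integrable (fun r => r * (0 - y/a) - h (r * (0 - y/a))) (ν a) :=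
      hInt a ha _ (by rw [abs_of_nonpos (by linarith)]; linarith)
    rw [betaChar, integral_congr_ae (.of_forall (inner_eq h hy0 hya)),
      integral_add (i1.const_mul y) (i2.const_mul (a - y)),
      integral_const_mul, integral_const_mul]
  constructor
  · -- part (i)
    intro a ha y hy0 hya
    have ht0 : 0 ≤ y / a := div_nonneg hy0 ha.le
    have ht1 : y / a ≤ 1 := (div_le_one ha).2 hya
    rw [key a ha y hy0 hya, abs_neg]
    -- bound each integral
    have hb1 : |∫ r, (r * (1 - y/a) - h (r * (1 - y/a))) ∂(ν a)|
        ≤ ∫ r, Set.indicator (Set.Ioi δ) id r ∂(ν a) := by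
      rw [← Real.norm_eq_abs]
      refine norm_integral_le_of_norm_le (hIndInt a ha) ((hae a ha).mono fun r hr => ?_)
      rw [Real.norm_eq_abs]
      have hr0 : 0 < r := hr.1
      by_cases hrδ : r ≤ δ
      · rw [hFzero _ (by rw [abs_of_nonneg (by nlinarith)]; nlinarith), abs_zero]
        exact Set.indicator_nonneg (fun x hx => le_of_lt (hδ.trans hx)) r
      · push_neg at hrδ
        rw [Set.indicator_of_mem (by exact hrδ : r ∈ Set.Ioi δ)]
        refine (hFle _).trans ?_
        rw [abs_of_nonneg (by nlinarith)]
        simp only [id]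
        nlinarith
    have hb2 : |∫ r, (r * (0 - y/a) - h (r * (0 - y/a))) ∂(ν a)|
        ≤ (y/a) * ∫ r, Set.indicator (Set.Ioi δ) id r ∂(ν a) := by
      rw [← Real.norm_eq_abs, ← integral_const_mul]
      refine norm_integral_le_of_norm_le ((hIndInt a ha).const_mul _)
        ((hae a ha).mono fun r hr => ?_)
      rw [Real.norm_eq_abs]
      have hr0 : 0 < r := hr.1
      by_cases hrδ : r ≤ δ
      · rw [hFzero _ (by rw [abs_of_nonpos (by nlinarith)]; nlinarith), abs_zero]
        exact mul_nonneg ht0 (Set.indicator_nonneg (fun x hx => le_of_lt (hδ.trans hx)) r)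
      · push_neg at hrδ
        rw [Set.indicator_of_mem (by exact hrδ : r ∈ Set.Ioi δ)]
        refine (hFle _).trans ?_
        rw [abs_of_nonpos (by nlinarith)]
        simp only [id]
        nlinarith
    rw [hIndEq] at hb1 hb2
    set R := ∫ r in Set.Ioi δ, r ∂(ν a) with hR
    have hRpos := hRδpos a
    calc |y * (∫ r, (r * (1 - y/a) - h (r * (1 - y/a))) ∂(ν a))
          + (a - y) * (∫ r, (r * (0 - y/a) - h (r * (0 - y/a))) ∂(ν a))|
        ≤ y * |∫ r, (r * (1 - y/a) - h (r * (1 - y/a))) ∂(ν a)|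
          + (a - y) * |∫ r, (r * (0 - y/a) - h (r * (0 - y/a))) ∂(ν a)| := by
          refine (abs_add_le _ _).trans ?_
          rw [abs_mul, abs_mul, abs_of_nonneg hy0, abs_of_nonneg (show (0:ℝ) ≤ a - y by linarith)]
      _ ≤ y * R + (a - y) * ((y/a) * R) := by
          gcongr
      _ ≤ 2 * y * R := by
          have hRpos' : 0 ≤ R := hRpos
          have : (a - y) * ((y/a) * R) ≤ y * R := by
            rw [div_mul_eq_mul_div, mul_div_assoc', div_le_iff₀ ha]
            nlinarith [mul_nonneg (mul_nonneg hy0 hy0) hRpos']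
          linarith
  · -- part (ii)
    intro M hM
    set c : ℝ := min 1 δ with hc
    have hc0 : 0 < c := lt_min one_pos hδ
    have hmin_pos : ∀ r : ℝ, 0 < r → 0 < min r (r ^ 2) := fun r hr => lt_min hr (by positivity)
    have hminc : Continuous (fun r : ℝ => min r (r ^ 2)) := continuous_id.min (continuous_pow 2)
    set I := ∫ r in Set.Ioi (0:ℝ), (r - h r) ∂π with hI
    -- convergence of total masses
    have hm : Tendsto (fun a => ∫ r in Set.Ioi (0:ℝ), min r (r ^ 2) ∂(ν a)) atTop
        (nhds (∫ r in Set.Ioi (0:ℝ), min r (r ^ 2) ∂π)) := by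
      have := hH (fun _ => 1) continuousOn_const ⟨1, fun x _ => by norm_num⟩
      simpa using this
    set mLim := ∫ r in Set.Ioi (0:ℝ), min r (r ^ 2) ∂π with hmLim
    have hmLim0 : 0 ≤ mLim := setIntegral_nonneg measurableSet_Ioi (fun r hr => (hmin_pos r hr).le)
    have hcr : ∀ r : ℝ, δ < r → c * r ≤ min r (r ^ 2) := by
      intro r hr
      have h0r : 0 < r := hδ.trans hr
      rcases le_total r 1 with h1 | h1
      · rw [min_eq_right (by nlinarith)]
        have hcδ : c ≤ δ := min_le_right _ _
        nlinarith
      · rw [min_eq_left (by nlinarith)]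
        have hc1 : c ≤ 1 := min_le_left _ _
        nlinarith
    clear_value c mLim
    -- convergence of ∫ (r - h r)
    have hfA : ∀ (μ : Measure ℝ), (∫ r in Set.Ioi (0:ℝ),
          ((r - h r) / (min r (r ^ 2))) * min r (r ^ 2) ∂μ)
        = ∫ r in Set.Ioi (0:ℝ), (r - h r) ∂μ := by
      intro μ
      refine setIntegral_congr_fun measurableSet_Ioi (fun r hr => ?_)
      exact div_mul_cancel₀ _ (ne_of_gt (hmin_pos r hr))
    have hA0 : Tendsto (fun a => ∫ r in Set.Ioi (0:ℝ), (r - h r) ∂(ν a)) atTop (nhds I) := by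
      have hcontf : ContinuousOn (fun r : ℝ => (r - h r) / (min r (r ^ 2))) (Set.Ioi 0) :=
        hcont.continuousOn.div hminc.continuousOn (fun r hr => ne_of_gt (hmin_pos r hr))
      have hbddf : ∃ C : ℝ, ∀ x ∈ Set.Ioi (0:ℝ), |(x - h x) / (min x (x ^ 2))| ≤ C := by
        refine ⟨1 / c, fun x hx => ?_⟩
        have hx0 : (0:ℝ) < x := hx
        rcases le_or_gt |x| δ with hxδ | hxδ
        · rw [F_zero h_id hxδ, zero_div, abs_zero]; positivity
        · rw [abs_of_pos hx0] at hxδ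
          rw [abs_div, abs_of_pos (hmin_pos x hx0), div_le_div_iff₀ (hmin_pos x hx0) hc0]
          have h1 : |x - h x| ≤ x := (hFle x).trans (le_of_eq (abs_of_pos hx0))
          have h2 := hcr x hxδ
          nlinarith
      have hten := hH _ hcontf hbddf
      rw [hfA] at hten
      exact hten.congr (fun a => hfA (ν a))
    -- the cutoff functions
    set φ : ℝ → ℝ → ℝ := fun K r => min 1 (max 0 (r - K)) with hφdef
    have hφcont : ∀ K, Continuous (φ K) := fun K =>
      continuous_const.min (continuous_const.max (continuous_id.sub continuous_const))
    have hφ01 : ∀ K r : ℝ, 0 ≤ φ K r ∧ φ K r ≤ 1 := fun K r =>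
      ⟨le_min zero_le_one (le_max_left _ _), min_le_left _ _⟩
    have hφone : ∀ K r : ℝ, K + 1 ≤ r → φ K r = 1 := by
      intro K r hr
      simp only [hφdef]
      rw [max_eq_right (by linarith), min_eq_left (by linarith)]
    have hφzero : ∀ K r : ℝ, r ≤ K → φ K r = 0 := by
      intro K r hr
      simp only [hφdef]
      rw [max_eq_left (by linarith), min_eq_right zero_le_one]
    clear_value φ
    -- π-integrability of the moment function
    have hπint : IntegrableOn (fun r => min r (r ^ 2)) (Set.Ioi 0) π := by
      refine ⟨hminc.aestronglyMeasurable, ?_⟩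
      rw [HasFiniteIntegral]
      calc ∫⁻ r in Set.Ioi 0, ‖min r (r ^ 2)‖₊ ∂π
          ≤ ∫⁻ r in Set.Ioi 0, ENNReal.ofReal (min r (r ^ 2)) ∂π := by
            refine lintegral_mono_ae ((ae_restrict_mem measurableSet_Ioi).mono fun r hr => ?_)
            change ‖min r (r ^ 2)‖ₑ ≤ _
            rw [Real.enorm_eq_ofReal_abs, abs_of_pos (hmin_pos r hr)]
        _ ≤ ∫⁻ r, ENNReal.ofReal (min r (r ^ 2)) ∂π := setLIntegral_le_lintegral _ _
        _ < ⊤ := hπmom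
    -- π tail vanishes
    have hπtail : Tendsto (fun K : ℕ => ∫ r in Set.Ioi (0:ℝ), φ K r * min r (r ^ 2) ∂π)
        atTop (nhds 0) := by
      have hDCT := tendsto_integral_of_dominated_convergence (μ := π.restrict (Set.Ioi 0))
        (F := fun (K : ℕ) (r : ℝ) => φ K r * min r (r ^ 2)) (f := fun _ => (0:ℝ))
        (bound := fun r => min r (r ^ 2))
        (fun K => ((hφcont K).mul hminc).aestronglyMeasurable)
        hπint
        (fun K => (ae_restrict_mem measurableSet_Ioi).mono fun r hr => by
          rw [Real.norm_eq_abs, abs_mul, abs_of_nonneg (hφ01 K r).1,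
            abs_of_pos (hmin_pos r hr)]
          exact mul_le_of_le_one_left (hmin_pos r hr).le (hφ01 K r).2)
        (.of_forall fun r => by
          have hev : ∀ᶠ K : ℕ in atTop, φ (K : ℝ) r * min r (r ^ 2) = 0 := by
            filter_upwards [eventually_ge_atTop ⌈r⌉₊] with K hK
            rw [hφzero K r ((Nat.le_ceil r).trans (by exact_mod_cast hK)), zero_mul]
          exact Tendsto.congr' (hev.mono fun K hK => hK.symm) tendsto_const_nhds)
      simpa using hDCT
    -- the moment function is ν a-integrable
    have hminInt : ∀ a : ℝ, 0 < a → Integrable (fun r => min r (r ^ 2)) (ν a) := by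
      intro a ha
      refine integrable_of_sq_bound (hνmom a ha) hminc.aestronglyMeasurable
        (by norm_num : (0:ℝ) ≤ 1) ((hae a ha).mono fun r hr => ?_)
      have hr0 : 0 < r := hr.1
      rw [abs_of_pos (hmin_pos r hr0), one_mul]
      rcases le_total r 1 with h1 | h1
      · exact (min_le_right _ _)
      · exact (min_le_left _ _).trans (by nlinarith)
    -- start the limit proof
    rw [Metric.tendsto_nhds]
    intro ε hε
    set ε' := ε / (3 * (M + 1)) with hε'def
    have hε'0 : 0 < ε' := by positivity
    have hMε' : M * ε' < ε / 3 := by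
      rw [hε'def, mul_div_assoc']
      rw [div_lt_div_iff₀ (by positivity) (by norm_num)]
      nlinarith
    clear_value I ε'
    obtain ⟨K, hK⟩ := (hπtail.eventually_lt_const (by positivity : (0:ℝ) < ε' / 2)).exists
    have hνφ : Tendsto (fun a => ∫ r in Set.Ioi (0:ℝ), φ K r * min r (r ^ 2) ∂(ν a)) atTop
        (nhds (∫ r in Set.Ioi (0:ℝ), φ K r * min r (r ^ 2) ∂π)) :=
      hH (φ K) (hφcont K).continuousOn
        ⟨1, fun x _ => by rw [abs_of_nonneg (hφ01 K x).1]; exact (hφ01 K x).2⟩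
    have hE4 : ∀ᶠ a : ℝ in atTop,
        (∫ r in Set.Ioi (0:ℝ), φ K r * min r (r ^ 2) ∂(ν a)) < ε' :=
      hνφ.eventually_lt_const (by linarith)
    have hE5 : ∀ᶠ a : ℝ in atTop,
        (∫ r in Set.Ioi (0:ℝ), min r (r ^ 2) ∂(ν a)) < mLim + 1 :=
      hm.eventually_lt_const (by linarith)
    have hE3 : ∀ᶠ a : ℝ in atTop,
        |(∫ r in Set.Ioi (0:ℝ), (r - h r) ∂(ν a)) - I| < ε' := by
      have h0 : Tendsto (fun a => |(∫ r in Set.Ioi (0:ℝ), (r - h r) ∂(ν a)) - I|) atTop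
          (nhds 0) := by
        have := (hA0.sub_const I).abs
        simpa using this
      exact h0.eventually_lt_const hε'0
    have hE6 : ∀ᶠ a : ℝ in atTop, M * ((2 * M / a) * ((mLim + 1) / c)) < ε / 3 := by
      have h0 : Tendsto (fun a : ℝ => M * ((2 * M / a) * ((mLim + 1) / c))) atTop (nhds 0) := by
        have hbase : Tendsto (fun a : ℝ => (M * (2 * M) * ((mLim + 1) / c)) / a) atTop
            (nhds 0) := Tendsto.div_atTop tendsto_const_nhds tendsto_id
        refine hbase.congr (fun a => by ring)
      exact h0.eventually_lt_const (by positivity)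
    filter_upwards [eventually_gt_atTop (0:ℝ), eventually_ge_atTop M,
      eventually_ge_atTop (((K:ℝ) + 1) * M / δ), hE3, hE4, hE5, hE6] with a ha haM haK hA0a hTa hma h6a
    rw [Real.dist_0_eq_abs]
    -- notation
    set Ta := ∫ r in Set.Ioi (0:ℝ), φ K r * min r (r ^ 2) ∂(ν a) with hTadef
    set ma := ∫ r in Set.Ioi (0:ℝ), min r (r ^ 2) ∂(ν a) with hmadef
    have hres : (ν a).restrict (Set.Ioi 0) = ν a :=
      Measure.restrict_eq_self_of_ae_mem ((hae a ha).mono fun r hr => hr.1)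
    have hTa0 : 0 ≤ Ta := setIntegral_nonneg measurableSet_Ioi
      (fun r hr => mul_nonneg (hφ01 K r).1 (hmin_pos r hr).le)
    have hma0 : 0 ≤ ma := setIntegral_nonneg measurableSet_Ioi (fun r hr => (hmin_pos r hr).le)
    clear_value Ta ma
    set B := M * ε' + M * ((2 * M / a) * ((mLim + 1) / c)) + M * ε' with hBdef
    clear_value B
    have hB0 : 0 ≤ B := by rw [hBdef]; positivity
    have hBε : B < ε := by
      rw [hBdef]
      linarith [hMε', h6a]
    have hsupnn : 0 ≤ ⨆ y ∈ Set.Icc (0:ℝ) M,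
        |betaChar h (ν a) a y + y * I| :=
      Real.iSup_nonneg fun y => Real.iSup_nonneg fun _ => abs_nonneg _
    rw [abs_of_nonneg hsupnn]
    refine lt_of_le_of_lt (Real.iSup_le (fun y => Real.iSup_le (fun hy => ?_) hB0) hB0) hBε
    -- pointwise estimate for y ∈ [0, M]
    obtain ⟨hy0, hyM⟩ := hy
    have hya : y ≤ a := hyM.trans haM
    have ht0 : 0 ≤ y / a := div_nonneg hy0 ha.le
    have ht1 : y / a ≤ 1 := (div_le_one ha).2 hya
    have iF : Integrable (fun r => r - h r) (ν a) := by
      have := hInt a ha 1 (by norm_num)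
      simpa using this
    have i1 : Integrable (fun r => r * (1 - y / a) - h (r * (1 - y / a))) (ν a) :=
      hInt a ha _ (by rw [abs_of_nonneg (by linarith)]; linarith)
    set A1 := ∫ r, (r * (1 - y / a) - h (r * (1 - y / a))) ∂(ν a) with hA1def
    set A2 := ∫ r, (r * (0 - y / a) - h (r * (0 - y / a))) ∂(ν a) with hA2def
    have hA0eq : (∫ r, (r - h r) ∂(ν a)) = ∫ r in Set.Ioi (0:ℝ), (r - h r) ∂(ν a) := by
      rw [hres]
    set A0 := ∫ r, (r - h r) ∂(ν a) with hA0def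
    clear_value A1 A2 A0
    -- Claim 1 : |A1 - A0| ≤ (2M/a) * (ma / c)
    have claim1 : |A1 - A0| ≤ (2 * M / a) * (ma / c) := by
      have hIndOn : IntegrableOn id (Set.Ioi δ) (ν a) := by
        rw [← integrable_indicator_iff measurableSet_Ioi]
        exact hIndInt a ha
      have hminOn : IntegrableOn (fun r => min r (r ^ 2) / c) (Set.Ioi 0) (ν a) :=
        ((hminInt a ha).div_const c).integrableOn
      have step1 : |A1 - A0| ≤ (2 * y / a) * ∫ r in Set.Ioi δ, r ∂(ν a) := by
        rw [hA1def, hA0def, ← integral_sub i1 iF, ← Real.norm_eq_abs,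
          ← hIndEq, ← integral_const_mul]
        refine norm_integral_le_of_norm_le ((hIndInt a ha).const_mul _)
          ((hae a ha).mono fun r hr => ?_)
        have hr0 : 0 < r := hr.1
        rw [Real.norm_eq_abs]
        by_cases hrδ : r ≤ δ
        · have harg : |r * (1 - y / a)| ≤ δ := by
            rw [abs_of_nonneg (by nlinarith [hr0.le, ht1] : (0:ℝ) ≤ r * (1 - y / a))]
            nlinarith [hr0.le, ht0]
          rw [Set.indicator_of_notMem (by simp only [Set.mem_Ioi, not_lt]; exact hrδ),
            hFzero _ harg, hFzero _ (by rw [abs_of_pos hr0]; exact hrδ), sub_zero, abs_zero,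
            mul_zero]
        · push_neg at hrδ
          rw [Set.indicator_of_mem (by exact hrδ : r ∈ Set.Ioi δ)]
          refine (F_lip2 h_lip _ _).trans ?_
          have he : |r * (1 - y / a) - r| = r * (y / a) := by
            rw [show r * (1 - y / a) - r = -(r * (y / a)) by ring, abs_neg,
              abs_of_nonneg (by positivity)]
          rw [he]
          simp only [id_eq]
          exact le_of_eq (by ring)
      have step2 : (∫ r in Set.Ioi δ, r ∂(ν a)) ≤ ma / c := by
        calc (∫ r in Set.Ioi δ, r ∂(ν a)) ≤ ∫ r in Set.Ioi δ, min r (r ^ 2) / c ∂(ν a) := by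
              refine setIntegral_mono_on (hIndOn) (hminOn.mono_set (Set.Ioi_subset_Ioi hδ.le))
                measurableSet_Ioi (fun r hr => ?_)
              rw [le_div_iff₀ hc0, mul_comm]
              exact hcr r hr
          _ ≤ ∫ r in Set.Ioi (0:ℝ), min r (r ^ 2) / c ∂(ν a) := by
              refine setIntegral_mono_set hminOn ?_
                ((HasSubset.Subset.eventuallyLE (Set.Ioi_subset_Ioi hδ.le)))
              refine (ae_restrict_mem measurableSet_Ioi).mono fun r hr => ?_
              have := hmin_pos r hr
              positivity
          _ = ma / c := by rw [hmadef, integral_div]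
      have hRnn : 0 ≤ ∫ r in Set.Ioi δ, r ∂(ν a) := hRδpos a
      calc |A1 - A0| ≤ (2 * y / a) * ∫ r in Set.Ioi δ, r ∂(ν a) := step1
        _ ≤ (2 * M / a) * (ma / c) := by
            have h2ya : 2 * y / a ≤ 2 * M / a := by gcongr
            have h2Ma : 0 ≤ 2 * M / a := by positivity
            calc (2 * y / a) * ∫ r in Set.Ioi δ, r ∂(ν a)
                ≤ (2 * M / a) * ∫ r in Set.Ioi δ, r ∂(ν a) := by gcongr
              _ ≤ (2 * M / a) * (ma / c) := by gcongr
    -- Claim 2 : |(a - y) * A2| ≤ M * Ta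
    have hφminInt : Integrable (fun r => φ K r * min r (r ^ 2)) (ν a) := by
      refine integrable_of_sq_bound (hνmom a ha)
        ((hφcont K).mul hminc).aestronglyMeasurable
        (by norm_num : (0:ℝ) ≤ 1) ((hae a ha).mono fun r hr => ?_)
      have hr0 : 0 < r := hr.1
      rw [abs_mul, abs_of_nonneg (hφ01 K r).1, abs_of_pos (hmin_pos r hr0), one_mul]
      have hle : min r (r ^ 2) ≤ r ^ 2 := by
        rcases le_total r 1 with h1 | h1
        · exact (min_le_right _ _)
        · exact (min_le_left _ _).trans (by nlinarith)
      calc φ K r * min r (r ^ 2) ≤ 1 * min r (r ^ 2) := by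
            gcongr
            exact (hφ01 K r).2
        _ = min r (r ^ 2) := one_mul _
        _ ≤ r ^ 2 := hle
    have claim2 : |(a - y) * A2| ≤ M * Ta := by
      have hTaeq : (∫ r, φ K r * min r (r ^ 2) ∂(ν a)) = Ta := by
        rw [hTadef]
        conv_lhs => rw [← hres]
      rw [hA2def, ← Real.norm_eq_abs, ← integral_const_mul, ← hTaeq, ← integral_const_mul]
      refine norm_integral_le_of_norm_le (hφminInt.const_mul _) ((hae a ha).mono fun r hr => ?_)
      have hr0 : 0 < r := hr.1
      have hra : r ≤ a := hr.2
      rw [Real.norm_eq_abs, abs_mul, abs_of_nonneg (show (0:ℝ) ≤ a - y by linarith)]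
      have hRHS0 : 0 ≤ M * (φ K r * min r (r ^ 2)) :=
        mul_nonneg hM.le (mul_nonneg (hφ01 K r).1 (hmin_pos r hr0).le)
      by_cases hx : |r * (0 - y / a)| ≤ δ
      · rw [hFzero _ hx, abs_zero, mul_zero]; exact hRHS0
      · push_neg at hx
        have hxval : |r * (0 - y / a)| = r * (y / a) := by
          rw [show r * (0 - y / a) = -(r * (y / a)) by ring, abs_neg,
            abs_of_nonneg (by positivity)]
        rw [hxval] at hx
        have hrK : (K : ℝ) + 1 ≤ r := by
          have h1 : δ * a < r * y := by
            calc δ * a < r * (y / a) * a := mul_lt_mul_of_pos_right hx ha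
              _ = r * y := by field_simp
          have h2 : ((K:ℝ) + 1) * M ≤ δ * a := by
            calc ((K:ℝ) + 1) * M = δ * (((K:ℝ) + 1) * M / δ) := by field_simp
              _ ≤ δ * a := mul_le_mul_of_nonneg_left haK hδ.le
          have h3 : ((K:ℝ) + 1) * M < r * M := by nlinarith [hr0.le]
          exact le_of_lt (lt_of_mul_lt_mul_right h3 hM.le)
        have hφ1 : φ K r = 1 := hφone K r hrK
        have hmin1 : min r (r ^ 2) = r := min_eq_left (by nlinarith [Nat.cast_nonneg (α := ℝ) K])
        have hF2 : |r * (0 - y / a) - h (r * (0 - y / a))| ≤ r * (y / a) :=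
          (hFle _).trans (le_of_eq hxval)
        calc (a - y) * |r * (0 - y / a) - h (r * (0 - y / a))|
            ≤ (a - y) * (r * (y / a)) :=
              mul_le_mul_of_nonneg_left hF2 (by linarith)
          _ ≤ M * (φ K r * min r (r ^ 2)) := by
              rw [hφ1, hmin1, one_mul]
              have h4 : (a - y) * (r * (y / a)) ≤ y * r := by
                rw [show (a - y) * (r * (y / a)) = ((a - y) * r * y) / a by ring,
                  div_le_iff₀ ha]
                nlinarith [mul_nonneg (mul_nonneg hr0.le hy0) hy0]
              have h5 : y * r ≤ M * r := by gcongr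
              linarith
    -- assemble
    have hA0aI : |A0 - I| < ε' := by rw [hA0eq]; exact hA0a
    rw [key a ha y hy0 hya, ← hA1def, ← hA2def]
    have e : -(y * A1 + (a - y) * A2) + y * I
        = y * (I - A0) + (-(y * (A1 - A0))) + (-((a - y) * A2)) := by ring
    rw [e]
    refine (abs_add_three _ _ _).trans ?_
    rw [abs_neg, abs_neg, abs_mul, abs_mul, abs_of_nonneg hy0, hBdef]
    have t1 : y * |I - A0| ≤ M * ε' := by
      rw [abs_sub_comm]
      exact mul_le_mul hyM hA0aI.le (abs_nonneg _) hM.le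
    have t2 : y * |A1 - A0| ≤ M * ((2 * M / a) * ((mLim + 1) / c)) := by
      have hmac : ma / c ≤ (mLim + 1) / c := by gcongr
      have hcl : |A1 - A0| ≤ (2 * M / a) * ((mLim + 1) / c) :=
        claim1.trans (mul_le_mul_of_nonneg_left hmac (by positivity))
      exact mul_le_mul hyM hcl (abs_nonneg _) hM.le
    have t3 : |(a - y) * A2| ≤ M * ε' := claim2.trans (by gcongr)
    linarith
end
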